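/- arXiv:1908.05767 — 3 statements merged into one kernel-verified Lean document; each statement's English description precedes it below -/
import Mathlib

section
/- Let u, v be unit vectors in ℝ^n and let r be a random vector distributed uniformly on the unit sphere of ℝ^n. Then the probability that the hyperplane with normal r separates u and v is ℙ(sign(⟨r,u⟩) ≠ sign(⟨r,v⟩)) = arccos(⟨u,v⟩)/π. -/
open MeasureTheory Real RealInnerProductSpace

noncomputable def sgn (t : ℝ) : ℝ := if 0 ≤ t then 1 else -1

namespace HypRound

variable {n : ℕ}

noncomputable def rotMap (w u : EuclideanSpace ℝ (Fin n)) (c s : ℝ) :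
    EuclideanSpace ℝ (Fin n) →ₗ[ℝ] EuclideanSpace ℝ (Fin n) :=
  LinearMap.id
    + (c - 1) • ((innerSL ℝ w).toLinearMap.smulRight w + (innerSL ℝ u).toLinearMap.smulRight u)
    + s • ((innerSL ℝ w).toLinearMap.smulRight u - (innerSL ℝ u).toLinearMap.smulRight w)

lemma rotMap_apply (w u : EuclideanSpace ℝ (Fin n)) (c s : ℝ) (x) :
    rotMap w u c s x = x + (c-1) • (⟪w,x⟫ • w + ⟪u,x⟫ • u) + s • (⟪w,x⟫ • u - ⟪u,x⟫ • w) := by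
  simp [rotMap]

lemma rotMap_inner {w u : EuclideanSpace ℝ (Fin n)} {c s : ℝ}
    (hw : ‖w‖ = 1) (hu : ‖u‖ = 1) (hwu : ⟪w,u⟫ = 0) (hcs : c^2 + s^2 = 1) (x y) :
    ⟪rotMap w u c s x, rotMap w u c s y⟫ = ⟪x, y⟫ := by
  have hww : ⟪w,w⟫ = 1 := by rw [real_inner_self_eq_norm_mul_norm, hw]; ring
  have huu : ⟪u,u⟫ = 1 := by rw [real_inner_self_eq_norm_mul_norm, hu]; ring
  have huw : ⟪u,w⟫ = 0 := by rw [real_inner_comm]; exact hwu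
  simp only [rotMap_apply, inner_add_left, inner_add_right, inner_sub_left, inner_sub_right,
    real_inner_smul_left, real_inner_smul_right, hww, huu, hwu, huw,
    real_inner_comm x w, real_inner_comm x u]
  linear_combination (⟪x,w⟫ * ⟪w,y⟫ + ⟪x,u⟫ * ⟪u,y⟫) * hcs

noncomputable def rotIso {w u : EuclideanSpace ℝ (Fin n)} {c s : ℝ}
    (hw : ‖w‖ = 1) (hu : ‖u‖ = 1) (hwu : ⟪w,u⟫ = 0) (hcs : c^2 + s^2 = 1) :
    EuclideanSpace ℝ (Fin n) ≃ₗᵢ[ℝ] EuclideanSpace ℝ (Fin n) :=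
  ((rotMap w u c s).isometryOfInner (rotMap_inner hw hu hwu hcs)).toLinearIsometryEquiv rfl

lemma rotIso_apply {w u : EuclideanSpace ℝ (Fin n)} {c s : ℝ}
    (hw : ‖w‖ = 1) (hu : ‖u‖ = 1) (hwu : ⟪w,u⟫ = 0) (hcs : c^2 + s^2 = 1) (x) :
    rotIso hw hu hwu hcs x = x + (c-1) • (⟪w,x⟫ • w + ⟪u,x⟫ • u) + s • (⟪w,x⟫ • u - ⟪u,x⟫ • w) := by
  rw [← rotMap_apply]; rfl

lemma rotIso_apply_w {w u : EuclideanSpace ℝ (Fin n)} {c s : ℝ}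
    (hw : ‖w‖ = 1) (hu : ‖u‖ = 1) (hwu : ⟪w,u⟫ = 0) (hcs : c^2 + s^2 = 1) :
    rotIso hw hu hwu hcs w = c • w + s • u := by
  have hww : ⟪w,w⟫ = 1 := by rw [real_inner_self_eq_norm_mul_norm, hw]; ring
  have huw : ⟪u,w⟫ = 0 := by rw [real_inner_comm]; exact hwu
  rw [rotIso_apply, hww, huw]
  module

lemma rotIso_apply_u {w u : EuclideanSpace ℝ (Fin n)} {c s : ℝ}
    (hw : ‖w‖ = 1) (hu : ‖u‖ = 1) (hwu : ⟪w,u⟫ = 0) (hcs : c^2 + s^2 = 1) :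
    rotIso hw hu hwu hcs u = (-s) • w + c • u := by
  have huu : ⟪u,u⟫ = 1 := by rw [real_inner_self_eq_norm_mul_norm, hu]; ring
  rw [rotIso_apply, huu, hwu]
  module

lemma rotIso_apply_orth {w u : EuclideanSpace ℝ (Fin n)} {c s : ℝ}
    (hw : ‖w‖ = 1) (hu : ‖u‖ = 1) (hwu : ⟪w,u⟫ = 0) (hcs : c^2 + s^2 = 1) {z}
    (h1 : ⟪w,z⟫ = 0) (h2 : ⟪u,z⟫ = 0) :
    rotIso hw hu hwu hcs z = z := by
  rw [rotIso_apply, h1, h2]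
  module


lemma measurableSet_innerZero (w : EuclideanSpace ℝ (Fin n)) :
    MeasurableSet {r : EuclideanSpace ℝ (Fin n) | ⟪w, r⟫ = 0} :=
  (isClosed_eq (Continuous.inner continuous_const continuous_id) continuous_const).measurableSet

variable (μ : Measure (EuclideanSpace ℝ (Fin n))) [IsProbabilityMeasure μ]

lemma null_zeroset
    (hsphere : μ {r | ‖r‖ = 1} = 1)
    (hinv : ∀ T : EuclideanSpace ℝ (Fin n) ≃ₗᵢ[ℝ] EuclideanSpace ℝ (Fin n), μ.map T = μ) :
    ∀ (m k : ℕ), 1 ≤ k → k + m = n → ∀ (f : Fin k → EuclideanSpace ℝ (Fin n)),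
      Orthonormal ℝ f → μ {r | ∀ i, ⟪f i, r⟫ = 0} = 0 := by
  have hSc : μ {r : EuclideanSpace ℝ (Fin n) | ‖r‖ = 1}ᶜ = 0 := by
    have hm : MeasurableSet {r : EuclideanSpace ℝ (Fin n) | ‖r‖ = 1} :=
      (isClosed_eq continuous_norm continuous_const).measurableSet
    rw [measure_compl hm (measure_ne_top μ _), hsphere, measure_univ, tsub_self]
  intro m
  induction m with
  | zero =>
    intro k hk hkn f hf
    have hcard : Module.finrank ℝ (EuclideanSpace ℝ (Fin n)) = Fintype.card (Fin k) := by
      simp [finrank_euclideanSpace_fin]; omega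
    have hres : Orthonormal ℝ ((Set.univ : Set (Fin k)).restrict f) :=
      hf.comp _ Subtype.val_injective
    obtain ⟨b, hb⟩ := hres.exists_orthonormalBasis_extension_of_card_eq (𝕜 := ℝ) hcard
    have hsub : {r : EuclideanSpace ℝ (Fin n) | ∀ i, ⟪f i, r⟫ = 0} ⊆
        {r : EuclideanSpace ℝ (Fin n) | ‖r‖ = 1}ᶜ := by
      intro r hr
      have hr0 : r = 0 := by
        have hrepr : b.repr r = 0 := by
          ext i
          have h1 := hr i
          rw [← hb i (Set.mem_univ i)] at h1
          simpa [OrthonormalBasis.repr_apply_apply] using h1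
        simpa using congrArg b.repr.symm hrepr
      simp [hr0]
    exact measure_mono_null hsub hSc
  | succ m ih =>
    intro k hk hkn f hf
    have hkn' : k < n := by omega
    obtain ⟨u, hu1, hufi⟩ :
        ∃ u : EuclideanSpace ℝ (Fin n), ‖u‖ = 1 ∧ ∀ i, ⟪f i, u⟫ = 0 := by
      have hKne : (Submodule.span ℝ (Set.range f)) ≠ ⊤ := by
        intro hK
        have h1 : Module.finrank ℝ (Submodule.span ℝ (Set.range f)) = n := by
          rw [hK]
          simpa [finrank_euclideanSpace_fin] using
            (finrank_top ℝ (EuclideanSpace ℝ (Fin n)))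
        have h2 : Module.finrank ℝ (Submodule.span ℝ (Set.range f)) = k := by
          simpa using finrank_span_eq_card hf.linearIndependent
        omega
      have hbot : (Submodule.span ℝ (Set.range f))ᗮ ≠ ⊥ := fun h =>
        hKne (Submodule.orthogonal_eq_bot_iff.mp h)
      obtain ⟨x, hxmem, hx0⟩ := Submodule.exists_mem_ne_zero_of_ne_bot hbot
      refine ⟨‖x‖⁻¹ • x, ?_, ?_⟩
      · rw [norm_smul, norm_inv, norm_norm, inv_mul_cancel₀ (norm_ne_zero_iff.mpr hx0)]
      · intro i
        have h0 := (Submodule.mem_orthogonal _ x).mp hxmem (f i)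
          (Submodule.subset_span (Set.mem_range_self i))
        rw [real_inner_smul_right, h0, mul_zero]
    set i₀ : Fin k := ⟨0, hk⟩ with hi₀
    have hf0 : ‖f i₀‖ = 1 := hf.1 i₀
    have hf0u : ⟪f i₀, u⟫ = 0 := hufi i₀
    have hfij := orthonormal_iff_ite.mp hf
    -- extended family
    set g : Fin (k+1) → EuclideanSpace ℝ (Fin n) := Fin.snoc f u with hg
    have huu : ⟪u,u⟫ = 1 := by rw [real_inner_self_eq_norm_mul_norm, hu1]; ring
    have hui : ∀ i, ⟪u, f i⟫ = 0 := fun i => by rw [real_inner_comm]; exact hufi i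
    have hgo : Orthonormal ℝ g := by
      rw [orthonormal_iff_ite]
      intro i j
      refine Fin.lastCases ?_ ?_ i
      · refine Fin.lastCases ?_ ?_ j
        · simp only [hg, Fin.snoc_last, if_true]; exact huu
        · intro j'
          have hne : (Fin.last k) ≠ j'.castSucc := (Fin.castSucc_lt_last j').ne'
          simp only [hg, Fin.snoc_last, Fin.snoc_castSucc]
          rw [if_neg hne]; exact hui j'
      · intro i'
        refine Fin.lastCases ?_ ?_ j
        · have hne : i'.castSucc ≠ (Fin.last k) := (Fin.castSucc_lt_last i').ne
          simp only [hg, Fin.snoc_last, Fin.snoc_castSucc]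
          rw [if_neg hne]; exact hufi i'
        · intro j'
          simp only [hg, Fin.snoc_castSucc]
          rw [hfij i' j']
          by_cases h : i' = j' <;> simp [h, Fin.castSucc_inj]
    have hZg0 : μ {r | ∀ i, ⟪g i, r⟫ = 0} = 0 := ih (k+1) (by omega) (by omega) g hgo
    -- angles
    set θ : ℕ → ℝ := fun j => π / (j + 2) with hθ
    have hθpos : ∀ j, 0 < θ j := fun j => div_pos pi_pos (by positivity)
    have hθle : ∀ j, θ j ≤ π / 2 := by
      intro j
      apply div_le_div_of_nonneg_left pi_pos.le two_pos
      · push_cast; linarith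
    have hθinj : ∀ j j' : ℕ, θ j = θ j' → j = j' := by
      intro j j' h
      have h' : π / ((j:ℝ) + 2) = π / ((j':ℝ) + 2) := h
      rw [div_eq_div_iff (by positivity) (by positivity)] at h'
      have h'' := mul_left_cancel₀ pi_ne_zero h'
      exact_mod_cast (by linarith : (j:ℝ) = j')
    have hcs : ∀ j, cos (θ j) ^ 2 + sin (θ j) ^ 2 = 1 := fun j => cos_sq_add_sin_sq _
    -- rotated sets
    set V : ℕ → Set (EuclideanSpace ℝ (Fin n)) := fun j =>
      {r | ⟪cos (θ j) • f i₀ + sin (θ j) • u, r⟫ = 0 ∧ ∀ i, i ≠ i₀ → ⟪f i, r⟫ = 0} with hV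
    have hVmeas : ∀ j, MeasurableSet (V j) := by
      intro j
      have : V j = {r | ⟪cos (θ j) • f i₀ + sin (θ j) • u, r⟫ = 0} ∩
          ⋂ (i) (_ : i ≠ i₀), {r | ⟪f i, r⟫ = 0} := by
        ext r; simp [hV]
      rw [this]
      exact (measurableSet_innerZero _).inter
        (MeasurableSet.iInter fun i => MeasurableSet.iInter fun _ => measurableSet_innerZero _)
    have hVμ : ∀ j, μ (V j) = μ {r | ∀ i, ⟪f i, r⟫ = 0} := by
      intro j
      set T := rotIso hf0 hu1 hf0u (hcs j) with hT
      have hpre : ⇑T ⁻¹' (V j) = {r | ∀ i, ⟪f i, r⟫ = 0} := by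
        ext r
        have h1 : ⟪cos (θ j) • f i₀ + sin (θ j) • u, T r⟫ = ⟪f i₀, r⟫ := by
          rw [← rotIso_apply_w hf0 hu1 hf0u (hcs j), ← hT, LinearIsometryEquiv.inner_map_map]
        have h2 : ∀ i, i ≠ i₀ → ⟪f i, T r⟫ = ⟪f i, r⟫ := by
          intro i hi
          have hfix : T (f i) = f i := by
            rw [hT]
            exact rotIso_apply_orth _ _ _ _ (by simpa [hi.symm] using hfij i₀ i)
              (by rw [real_inner_comm]; exact hufi i)
          rw [← LinearIsometryEquiv.inner_map_map T (f i) r, hfix]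
        simp only [Set.mem_preimage, hV, Set.mem_setOf_eq, h1]
        constructor
        · rintro ⟨ha, hb⟩ i
          by_cases hii : i = i₀
          · rwa [hii]
          · rw [← h2 i hii]; exact hb i hii
        · intro hall
          exact ⟨hall i₀, fun i hi => by rw [h2 i hi]; exact hall i⟩
      calc μ (V j) = (μ.map T) (V j) := by rw [hinv T]
        _ = μ (⇑T ⁻¹' (V j)) := Measure.map_apply T.continuous.measurable (hVmeas j)
        _ = μ {r | ∀ i, ⟪f i, r⟫ = 0} := by rw [hpre]
    -- pairwise intersections land in the zero set of g
    have hVinter : ∀ j j' : ℕ, j ≠ j' → V j ∩ V j' ⊆ {r | ∀ i, ⟪g i, r⟫ = 0} := by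
      intro j j' hjj' r hr
      obtain ⟨⟨e1, hrest⟩, ⟨e2, _⟩⟩ := hr
      set a := ⟪f i₀, r⟫ with ha
      set b := ⟪u, r⟫ with hb
      have he1 : cos (θ j) * a + sin (θ j) * b = 0 := by
        rw [ha, hb]
        rw [inner_add_left, real_inner_smul_left, real_inner_smul_left] at e1
        linarith [e1]
      have he2 : cos (θ j') * a + sin (θ j') * b = 0 := by
        rw [ha, hb]
        rw [inner_add_left, real_inner_smul_left, real_inner_smul_left] at e2
        linarith [e2]
      have hdet : sin (θ j' - θ j) ≠ 0 := by
        have hb1 : -π < θ j' - θ j := by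
          have := hθpos j'; have := hθle j; have := pi_pos; linarith
        have hb2 : θ j' - θ j < π := by
          have := hθpos j; have := hθle j'; have := pi_pos; linarith
        intro h0
        rw [Real.sin_eq_zero_iff_of_lt_of_lt hb1 hb2] at h0
        exact hjj' (hθinj j j' (by linarith))
      rw [Real.sin_sub] at hdet
      have ha0 : a = 0 := by
        have h3 : (sin (θ j') * cos (θ j) - cos (θ j') * sin (θ j)) * a = 0 := by
          linear_combination sin (θ j') * he1 - sin (θ j) * he2
        rcases mul_eq_zero.mp h3 with h | h
        · exact absurd h hdet
        · exact h
      have hb0 : b = 0 := by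
        have h3 : (sin (θ j') * cos (θ j) - cos (θ j') * sin (θ j)) * b = 0 := by
          linear_combination cos (θ j) * he2 - cos (θ j') * he1
        rcases mul_eq_zero.mp h3 with h | h
        · exact absurd h hdet
        · exact h
      intro i
      refine Fin.lastCases ?_ ?_ i
      · simpa [hg, Fin.snoc_last] using hb0
      · intro i'
        simp only [hg, Fin.snoc_castSucc]
        by_cases hii : i' = i₀
        · rw [hii]; exact ha0
        · exact hrest i' hii
    -- conclude
    by_contra hc
    have hZgmeas : MeasurableSet {r : EuclideanSpace ℝ (Fin n) | ∀ i, ⟪g i, r⟫ = 0} := by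
      have : {r : EuclideanSpace ℝ (Fin n) | ∀ i, ⟪g i, r⟫ = 0} =
          ⋂ i, {r | ⟪g i, r⟫ = 0} := by ext r; simp
      rw [this]
      exact MeasurableSet.iInter fun i => measurableSet_innerZero _
    set D : ℕ → Set (EuclideanSpace ℝ (Fin n)) :=
      fun j => V j \ {r | ∀ i, ⟪g i, r⟫ = 0} with hD
    have hDmeas : ∀ j, MeasurableSet (D j) := fun j => (hVmeas j).diff hZgmeas
    have hDdisj : Pairwise (Function.onFun Disjoint D) := by
      intro j j' hjj'
      rw [Function.onFun, Set.disjoint_iff]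
      rintro r ⟨⟨h1, h2⟩, ⟨h3, h4⟩⟩
      exact h2 (hVinter j j' hjj' ⟨h1, h3⟩)
    have hDμ : ∀ j, μ (D j) = μ {r | ∀ i, ⟪f i, r⟫ = 0} := by
      intro j
      refine le_antisymm (le_trans (measure_mono Set.diff_subset) (hVμ j).le) ?_
      calc μ {r | ∀ i, ⟪f i, r⟫ = 0} = μ (V j) := (hVμ j).symm
        _ ≤ μ (D j) + μ {r | ∀ i, ⟪g i, r⟫ = 0} := by
            refine le_trans (measure_mono ?_) (measure_union_le _ _)
            exact fun r hr => by
              by_cases h : r ∈ {r | ∀ i, ⟪g i, r⟫ = 0}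
              · exact Or.inr h
              · exact Or.inl ⟨hr, h⟩
        _ = μ (D j) := by rw [hZg0, add_zero]
    have htop : (⊤ : ENNReal) ≤ 1 := by
      calc (⊤ : ENNReal) = ∑' _ : ℕ, μ {r | ∀ i, ⟪f i, r⟫ = 0} :=
            (ENNReal.tsum_const_eq_top_of_ne_zero hc).symm
        _ = ∑' j : ℕ, μ (D j) := by simp only [hDμ]
        _ = μ (⋃ j, D j) := (measure_iUnion hDdisj hDmeas).symm
        _ ≤ 1 := prob_le_one
    simp at htop

lemma null_hyperplane
    (hsphere : μ {r | ‖r‖ = 1} = 1)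
    (hinv : ∀ T : EuclideanSpace ℝ (Fin n) ≃ₗᵢ[ℝ] EuclideanSpace ℝ (Fin n), μ.map T = μ)
    (hn : 1 ≤ n) (w : EuclideanSpace ℝ (Fin n)) (hw : ‖w‖ = 1) :
    μ {r | ⟪w, r⟫ = 0} = 0 := by
  have horth : Orthonormal ℝ (fun _ : Fin 1 => w) := by
    rw [orthonormal_iff_ite]
    intro i j
    have hij : i = j := Subsingleton.elim i j
    rw [if_pos hij, real_inner_self_eq_norm_mul_norm, hw]; ring
  have h := null_zeroset μ hsphere hinv (n-1) 1 le_rfl (by omega) _ horth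
  have : {r : EuclideanSpace ℝ (Fin n) | ∀ i : Fin 1, ⟪w, r⟫ = 0} =
      {r | ⟪w, r⟫ = 0} := by ext r; simp
  rwa [this] at h


lemma sgn_vals (t : ℝ) : sgn t = 1 ∨ sgn t = -1 := by
  unfold sgn; split <;> simp

lemma sgn_eq_one_iff {t : ℝ} : sgn t = 1 ↔ 0 ≤ t := by
  unfold sgn; by_cases h : 0 ≤ t <;> simp [h] <;> norm_num

lemma sgn_ne_iff {a b : ℝ} : sgn a ≠ sgn b ↔ ((0 ≤ a ∧ ¬ 0 ≤ b) ∨ (0 ≤ b ∧ ¬ 0 ≤ a)) := by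
  unfold sgn
  by_cases h1 : 0 ≤ a <;> by_cases h2 : 0 ≤ b <;> norm_num [h1, h2]

lemma sgn_neg_ne {t : ℝ} (h : t ≠ 0) : sgn (-t) ≠ sgn t := by
  unfold sgn
  rcases lt_trichotomy t 0 with h1 | h1 | h1
  · rw [if_neg (not_le.mpr h1), if_pos (by linarith)]; norm_num
  · exact absurd h1 h
  · rw [if_pos h1.le, if_neg (by simp [not_le]; linarith)]; norm_num

lemma sgn_combo {α β a b : ℝ} (hα : 0 ≤ α) (hβ : 0 ≤ β) (hne : α ≠ 0 ∨ β ≠ 0)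
    (h : sgn a = sgn b) : sgn (α * a + β * b) = sgn a := by
  by_cases ha : 0 ≤ a
  · have hb : 0 ≤ b := sgn_eq_one_iff.mp (h ▸ sgn_eq_one_iff.mpr ha)
    rw [sgn_eq_one_iff.mpr ha, sgn_eq_one_iff.mpr (by positivity)]
  · have ha' : a < 0 := not_le.mp ha
    have hb : ¬ (0 ≤ b) := by
      intro hb
      rw [sgn_eq_one_iff.mpr hb] at h
      exact ha (sgn_eq_one_iff.mp h)
    have hb' : b < 0 := not_le.mp hb
    have hsum : α * a + β * b < 0 := by
      rcases hne with h0 | h0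
      · have : 0 < α := lt_of_le_of_ne hα (Ne.symm h0)
        nlinarith
      · have : 0 < β := lt_of_le_of_ne hβ (Ne.symm h0)
        nlinarith
    unfold sgn
    rw [if_neg (not_le.mpr hsum), if_neg ha]

def ev (u v : EuclideanSpace ℝ (Fin n)) : Set (EuclideanSpace ℝ (Fin n)) :=
  {r | sgn ⟪r, u⟫ ≠ sgn ⟪r, v⟫}

lemma measurableSet_ev (u v : EuclideanSpace ℝ (Fin n)) : MeasurableSet (ev u v) := by
  have hS : ∀ w : EuclideanSpace ℝ (Fin n),
      MeasurableSet {r : EuclideanSpace ℝ (Fin n) | 0 ≤ ⟪r, w⟫} := fun w =>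
    (isClosed_le continuous_const (Continuous.inner continuous_id continuous_const)).measurableSet
  have : ev u v = ({r | 0 ≤ ⟪r, u⟫} \ {r | 0 ≤ ⟪r, v⟫}) ∪
      ({r | 0 ≤ ⟪r, v⟫} \ {r | 0 ≤ ⟪r, u⟫}) := by
    ext r
    simp only [ev, Set.mem_setOf_eq, Set.mem_union, Set.mem_diff, Set.mem_setOf_eq]
    exact sgn_ne_iff
  rw [this]
  exact (((hS u).diff (hS v)).union ((hS v).diff (hS u)))

lemma ev_add (μ : Measure (EuclideanSpace ℝ (Fin n))) (u v w : EuclideanSpace ℝ (Fin n))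
    (hwn : ‖w‖ = 1) {α β : ℝ} (hα : 0 ≤ α) (hβ : 0 ≤ β) (hw : w = α • u + β • v) :
    μ (ev u v) = μ (ev u w) + μ (ev w v) := by
  have hne : α ≠ 0 ∨ β ≠ 0 := by
    by_contra hc
    push_neg at hc
    rw [hc.1, hc.2, zero_smul, zero_smul, add_zero] at hw
    rw [hw] at hwn
    simp at hwn
  have hcombo : ∀ r : EuclideanSpace ℝ (Fin n), ⟪r, w⟫ = α * ⟪r, u⟫ + β * ⟪r, v⟫ := by
    intro r
    rw [hw, inner_add_right, real_inner_smul_right, real_inner_smul_right]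
  have hkey : ∀ r : EuclideanSpace ℝ (Fin n), sgn ⟪r,u⟫ = sgn ⟪r,v⟫ → sgn ⟪r,w⟫ = sgn ⟪r,u⟫ := by
    intro r h
    rw [hcombo r]
    exact sgn_combo hα hβ hne h
  have hsets : ev u v = ev u w ∪ ev w v := by
    ext r
    simp only [ev, Set.mem_setOf_eq, Set.mem_union]
    constructor
    · intro h
      by_contra hc
      push_neg at hc
      exact h (hc.1.trans hc.2)
    · rintro (h | h) heq
      · exact h (hkey r heq).symm
      · exact h ((hkey r heq).trans heq)
  have hdisj : Disjoint (ev u w) (ev w v) := by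
    rw [Set.disjoint_iff]
    rintro r ⟨h1, h2⟩
    simp only [ev, Set.mem_setOf_eq] at h1 h2
    have huv : sgn ⟪r,u⟫ = sgn ⟪r,v⟫ := by
      rcases sgn_vals (⟪r,u⟫:ℝ) with ha | ha <;> rcases sgn_vals (⟪r,v⟫:ℝ) with hb | hb <;>
        rcases sgn_vals (⟪r,w⟫:ℝ) with hw' | hw' <;>
        rw [ha, hw'] at h1 <;> rw [hw', hb] at h2 <;> rw [ha, hb] <;> contradiction
    exact h1 (hkey r huv).symm
  rw [hsets, measure_union hdisj (measurableSet_ev _ _)]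

lemma ev_map (μ : Measure (EuclideanSpace ℝ (Fin n)))
    (hinv : ∀ T : EuclideanSpace ℝ (Fin n) ≃ₗᵢ[ℝ] EuclideanSpace ℝ (Fin n), μ.map T = μ)
    (T : EuclideanSpace ℝ (Fin n) ≃ₗᵢ[ℝ] EuclideanSpace ℝ (Fin n))
    (u v : EuclideanSpace ℝ (Fin n)) :
    μ (ev (T u) (T v)) = μ (ev u v) := by
  have hpre : ⇑T ⁻¹' (ev (T u) (T v)) = ev u v := by
    ext r
    simp only [Set.mem_preimage, ev, Set.mem_setOf_eq, LinearIsometryEquiv.inner_map_map]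
  calc μ (ev (T u) (T v)) = (μ.map T) (ev (T u) (T v)) := by rw [hinv T]
    _ = μ (⇑T ⁻¹' (ev (T u) (T v))) :=
        Measure.map_apply T.continuous.measurable (measurableSet_ev _ _)
    _ = μ (ev u v) := by rw [hpre]

noncomputable def e1v (n : ℕ) (hn : 2 ≤ n) : EuclideanSpace ℝ (Fin n) :=
  EuclideanSpace.single ⟨0, by omega⟩ 1

noncomputable def e2v (n : ℕ) (hn : 2 ≤ n) : EuclideanSpace ℝ (Fin n) :=
  EuclideanSpace.single ⟨1, by omega⟩ 1

lemma e1v_norm (hn : 2 ≤ n) : ‖e1v n hn‖ = 1 := by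
  rw [e1v, EuclideanSpace.norm_single]; norm_num

lemma e2v_norm (hn : 2 ≤ n) : ‖e2v n hn‖ = 1 := by
  rw [e2v, EuclideanSpace.norm_single]; norm_num

lemma e1v_e2v_inner (hn : 2 ≤ n) : ⟪e1v n hn, e2v n hn⟫ = 0 := by
  rw [e1v, e2v, EuclideanSpace.inner_single_left]
  simp [EuclideanSpace.single_apply]

lemma exists_iso_pair (hn : 2 ≤ n) {u w1 : EuclideanSpace ℝ (Fin n)}
    (hu : ‖u‖ = 1) (hw1 : ‖w1‖ = 1) (horth : ⟪u, w1⟫ = 0) :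
    ∃ T : EuclideanSpace ℝ (Fin n) ≃ₗᵢ[ℝ] EuclideanSpace ℝ (Fin n),
      T (e1v n hn) = u ∧ T (e2v n hn) = w1 := by
  set i0 : Fin n := ⟨0, by omega⟩ with hi0
  set i1 : Fin n := ⟨1, by omega⟩ with hi1
  have hi01 : i0 ≠ i1 := by simp [hi0, hi1, Fin.ext_iff]
  set vf : Fin n → EuclideanSpace ℝ (Fin n) := fun i => if i = i0 then u else w1 with hvf
  set s : Set (Fin n) := {i0, i1} with hs
  have hres : Orthonormal ℝ (s.restrict vf) := by
    rw [orthonormal_iff_ite]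
    rintro ⟨x, hx⟩ ⟨y, hy⟩
    have hval : ∀ z ∈ s, z = i0 ∨ z = i1 := fun z hz => hz
    have huu : ⟪u,u⟫ = 1 := by rw [real_inner_self_eq_norm_mul_norm, hu]; ring
    have hww : ⟪w1,w1⟫ = 1 := by rw [real_inner_self_eq_norm_mul_norm, hw1]; ring
    have hwu : ⟪w1,u⟫ = 0 := by rw [real_inner_comm]; exact horth
    have hsub : (⟨x, hx⟩ : s) = (⟨y, hy⟩ : s) ↔ x = y := Subtype.mk_eq_mk
    rcases hval x hx with hx' | hx' <;> rcases hval y hy with hy' | hy' <;>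
      simp only [Set.restrict_apply, hvf, hx', hy', if_pos rfl, if_neg hi01.symm,
        hsub] <;> simp_all [hi01, hi01.symm, Set.restrict]
  have hcard : Module.finrank ℝ (EuclideanSpace ℝ (Fin n)) = Fintype.card (Fin n) := by
    simp [finrank_euclideanSpace_fin]
  obtain ⟨b, hb⟩ := hres.exists_orthonormalBasis_extension_of_card_eq (𝕜 := ℝ) hcard
  refine ⟨b.repr.symm, ?_, ?_⟩
  · have h0 : b i0 = u := by
      have := hb i0 (by simp [hs])
      simpa [hvf] using this
    exact ((b.repr_symm_single i0).trans h0 : _)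
  · have h1 : b i1 = w1 := by
      have := hb i1 (by simp [hs])
      simpa [hvf, hi01.symm] using this
    exact ((b.repr_symm_single i1).trans h1 : _)


lemma sgn_eq_of_ne_ne {x y z : ℝ} (h1 : sgn x ≠ sgn y) (h2 : sgn y ≠ sgn z) :
    sgn x = sgn z := by
  rcases sgn_vals x with hx | hx <;> rcases sgn_vals y with hy | hy <;>
    rcases sgn_vals z with hz | hz <;>
    rw [hx, hy] at h1 <;> rw [hy, hz] at h2 <;> rw [hx, hz] <;> contradiction

set_option maxHeartbeats 2000000 in
lemma Q_value (hn : 2 ≤ n) (μ : Measure (EuclideanSpace ℝ (Fin n))) [IsProbabilityMeasure μ]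
    (hsphere : μ {r | ‖r‖ = 1} = 1)
    (hinv : ∀ T : EuclideanSpace ℝ (Fin n) ≃ₗᵢ[ℝ] EuclideanSpace ℝ (Fin n), μ.map T = μ)
    {θ : ℝ} (h0 : 0 ≤ θ) (hπ : θ ≤ π) :
    μ (ev (e1v n hn) (cos θ • e1v n hn + sin θ • e2v n hn)) = ENNReal.ofReal (θ / π) := by
  set E1 := e1v n hn with hE1def
  set E2 := e2v n hn with hE2def
  have hE1 : ‖E1‖ = 1 := e1v_norm hn
  have hE2 : ‖E2‖ = 1 := e2v_norm hn
  have h12 : ⟪E1, E2⟫ = 0 := e1v_e2v_inner hn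
  have h21 : ⟪E2, E1⟫ = 0 := by rw [real_inner_comm]; exact h12
  have hE11 : ⟪E1, E1⟫ = 1 := by rw [real_inner_self_eq_norm_sq, hE1]; norm_num
  have hE22 : ⟪E2, E2⟫ = 1 := by rw [real_inner_self_eq_norm_sq, hE2]; norm_num
  set U : ℝ → EuclideanSpace ℝ (Fin n) := fun t => cos t • E1 + sin t • E2 with hU
  have hcs : ∀ t : ℝ, cos t ^ 2 + sin t ^ 2 = 1 := fun t => cos_sq_add_sin_sq t
  have hUnorm : ∀ t, ‖U t‖ = 1 := by
    intro t
    have hin : ⟪U t, U t⟫ = 1 := by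
      simp only [hU, inner_add_left, inner_add_right, real_inner_smul_left,
        real_inner_smul_right, hE11, hE22, h12, h21]
      linear_combination cos_sq_add_sin_sq t
    have h3 : ⟪U t, U t⟫ = ‖U t‖ ^ 2 := real_inner_self_eq_norm_sq _
    nlinarith [norm_nonneg (U t)]
  have hRE1 : ∀ a : ℝ, rotIso hE1 hE2 h12 (hcs a) E1 = U a := fun a =>
    rotIso_apply_w hE1 hE2 h12 (hcs a)
  have hRU : ∀ a b : ℝ, rotIso hE1 hE2 h12 (hcs a) (U b) = U (a + b) := by
    intro a b
    simp only [hU, map_add, LinearIsometryEquiv.map_smul,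
      rotIso_apply_w hE1 hE2 h12 (hcs a), rotIso_apply_u hE1 hE2 h12 (hcs a)]
    rw [cos_add, sin_add]
    module
  have hQrot : ∀ a d : ℝ, μ (ev (U a) (U (a + d))) = μ (ev E1 (U d)) := by
    intro a d
    have h := ev_map μ hinv (rotIso hE1 hE2 h12 (hcs a)) E1 (U d)
    rwa [hRE1 a, hRU a d] at h
  set Q : ℝ → ENNReal := fun t => μ (ev E1 (U t)) with hQdef
  have hU0 : U 0 = E1 := by simp [hU]
  have hUπ : U π = -E1 := by simp [hU]
  have hQ0 : Q 0 = 0 := by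
    have he : ev E1 (U 0) = ∅ := by
      rw [hU0]; ext r; simp [ev]
    simp only [hQdef, he, measure_empty]
  have hN : μ {r | ⟪E1, r⟫ = 0} = 0 := null_hyperplane μ hsphere hinv (by omega) E1 hE1
  have hπadd : ∀ t, 0 ≤ t → t ≤ π → Q t + Q (π - t) = 1 := by
    intro t ht0 htπ
    have hB : μ (ev (U t) (U π)) = Q (π - t) := by
      have h := hQrot t (π - t)
      rwa [show t + (π - t) = π by ring] at h
    have hsub1 : ev E1 (U t) ∩ ev (U t) (U π) ⊆ {r | ⟪E1, r⟫ = 0} := by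
      rintro r ⟨h1, h2⟩
      simp only [ev, Set.mem_setOf_eq] at h1 h2
      by_contra hne
      have hner : (⟪r, E1⟫ : ℝ) ≠ 0 := by
        rw [real_inner_comm]; exact hne
      have h3 : sgn (⟪r, E1⟫ : ℝ) = sgn (⟪r, U π⟫ : ℝ) := sgn_eq_of_ne_ne h1 h2
      rw [hUπ, inner_neg_right] at h3
      exact sgn_neg_ne hner h3.symm
    have hsub2 : {r : EuclideanSpace ℝ (Fin n) | ⟪E1, r⟫ = 0}ᶜ ⊆
        ev E1 (U t) ∪ ev (U t) (U π) := by
      intro r hr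
      have hner : (⟪r, E1⟫ : ℝ) ≠ 0 := by
        rw [real_inner_comm]; exact hr
      by_cases h1 : r ∈ ev E1 (U t)
      · exact Or.inl h1
      · right
        simp only [ev, Set.mem_setOf_eq] at h1 ⊢
        have h1' : sgn (⟪r, E1⟫ : ℝ) = sgn (⟪r, U t⟫ : ℝ) := not_ne_iff.mp h1
        intro heq
        have h4 : sgn (⟪r, E1⟫ : ℝ) = sgn (⟪r, U π⟫ : ℝ) := h1'.trans heq
        rw [hUπ, inner_neg_right] at h4
        exact sgn_neg_ne hner h4.symm
    have hNmeas := measurableSet_innerZero (n := n) E1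
    have hunion : μ (ev E1 (U t) ∪ ev (U t) (U π)) = 1 := by
      refine le_antisymm prob_le_one ?_
      calc (1 : ENNReal) = μ {r : EuclideanSpace ℝ (Fin n) | ⟪E1, r⟫ = 0}ᶜ := by
            rw [measure_compl hNmeas (measure_ne_top μ _), hN, measure_univ, tsub_zero]
        _ ≤ μ (ev E1 (U t) ∪ ev (U t) (U π)) := measure_mono hsub2
    have hinter : μ (ev E1 (U t) ∩ ev (U t) (U π)) = 0 := measure_mono_null hsub1 hN
    have hkey := measure_union_add_inter (μ := μ) (ev E1 (U t)) (measurableSet_ev (U t) (U π))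
    rw [hunion, hinter, add_zero] at hkey
    show μ (ev E1 (U t)) + Q (π - t) = 1
    rw [← hB]
    exact hkey.symm
  have hQπ : Q π = 1 := by
    have h := hπadd 0 le_rfl pi_pos.le
    rwa [hQ0, zero_add, sub_zero] at h
  have hQadd : ∀ t1 t2, 0 ≤ t1 → 0 ≤ t2 → t1 + t2 ≤ π → Q (t1 + t2) = Q t1 + Q t2 := by
    intro t1 t2 h1 h2 hle
    rcases eq_or_lt_of_le hle with heq | hlt
    · have e1 := hπadd t1 h1 (by linarith)
      rw [show π - t1 = t2 by linarith] at e1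
      rw [heq, hQπ, e1]
    · rcases eq_or_lt_of_le h1 with h1' | h1'
      · rw [← h1', zero_add, hQ0, zero_add]
      · rcases eq_or_lt_of_le h2 with h2' | h2'
        · rw [← h2', add_zero, hQ0, add_zero]
        · have hS : 0 < sin (t1 + t2) := sin_pos_of_pos_of_lt_pi (by linarith) hlt
          set α := sin t2 / sin (t1 + t2) with hα
          set β := sin t1 / sin (t1 + t2) with hβ
          have hα0 : 0 ≤ α :=
            div_nonneg (sin_nonneg_of_nonneg_of_le_pi (by linarith) (by linarith)) hS.le
          have hβ0 : 0 ≤ β :=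
            div_nonneg (sin_nonneg_of_nonneg_of_le_pi (by linarith) (by linarith)) hS.le
          have hexp : sin t2 = sin (t1 + t2) * cos t1 - cos (t1 + t2) * sin t1 := by
            conv_lhs => rw [show t2 = (t1 + t2) - t1 by ring]
            rw [sin_sub]
          have hA : α + β * cos (t1 + t2) = cos t1 := by
            rw [hα, hβ]
            field_simp
            linear_combination hexp
          have hB : β * sin (t1 + t2) = sin t1 := div_mul_cancel₀ _ hS.ne'
          have hcone : U t1 = α • E1 + β • U (t1 + t2) := by
            simp only [hU]
            rw [← hA, ← hB]
            module
          have hsplit := ev_add μ E1 (U (t1 + t2)) (U t1) (hUnorm t1) hα0 hβ0 hcone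
          have hrot := hQrot t1 t2
          show μ (ev E1 (U (t1 + t2))) = Q t1 + Q t2
          rw [hsplit, hrot]
  have hQne : ∀ t, Q t ≠ ⊤ := fun t => measure_ne_top μ _
  have hQnat : ∀ (k : ℕ) (t : ℝ), 0 ≤ t → (k : ℝ) * t ≤ π →
      Q ((k : ℝ) * t) = (k : ENNReal) * Q t := by
    intro k
    induction k with
    | zero => intro t ht hle; simp [hQ0]
    | succ k ih =>
      intro t ht hle
      have hk : (k : ℝ) * t ≤ π := by
        have : (k : ℝ) * t ≤ ((k : ℝ) + 1) * t := by nlinarith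
        push_cast at hle
        linarith
      have hsum : ((k + 1 : ℕ) : ℝ) * t = (k : ℝ) * t + t := by push_cast; ring
      rw [hsum, hQadd ((k : ℝ) * t) t (by positivity) ht (by push_cast at hle ⊢; linarith),
        ih t ht hk]
      push_cast
      ring
  have hQmono : ∀ s t, 0 ≤ s → s ≤ t → t ≤ π → Q s ≤ Q t := by
    intro s t hs hst htπ
    have h := hQadd s (t - s) hs (by linarith) (by linarith)
    rw [show s + (t - s) = t by ring] at h
    rw [h]
    exact le_self_add
  -- real-valued version
  set q : ℝ → ℝ := fun t => (Q t).toReal with hq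
  have hq_mono : ∀ s t, 0 ≤ s → s ≤ t → t ≤ π → q s ≤ q t := fun s t hs hst htπ =>
    ENNReal.toReal_mono (hQne t) (hQmono s t hs hst htπ)
  have hq_le_one : ∀ t, q t ≤ 1 := by
    intro t
    have h1 : Q t ≤ 1 := prob_le_one
    have := ENNReal.toReal_mono (by simp : (1 : ENNReal) ≠ ⊤) h1
    simpa using this
  have hqπ : q π = 1 := by rw [hq]; simp only [hQπ, ENNReal.toReal_one]
  have hqnat : ∀ (k : ℕ) (t : ℝ), 0 ≤ t → (k : ℝ) * t ≤ π →
      q ((k : ℝ) * t) = (k : ℝ) * q t := by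
    intro k t ht hle
    rw [hq]
    simp only [hQnat k t ht hle, ENNReal.toReal_mul, ENNReal.toReal_natCast]
  have hbound : ∀ m : ℕ, 0 < m → |q θ - θ / π| ≤ 1 / m := by
    intro m hm
    have hm0 : (0 : ℝ) < m := by exact_mod_cast hm
    have hmne : (m : ℝ) ≠ 0 := hm0.ne'
    have hπm_pos : 0 < π / m := div_pos pi_pos hm0
    have hqm : q (π / m) = 1 / m := by
      have h1 : (m : ℝ) * (π / m) = π := by field_simp
      have h2 := hqnat m (π / m) hπm_pos.le (by rw [h1])
      rw [h1, hqπ] at h2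
      field_simp at h2 ⊢
      linarith
    set k := ⌊θ * m / π⌋₊ with hk
    have hk_le : (k : ℝ) ≤ θ * m / π := Nat.floor_le (by positivity)
    have hk_gt : θ * m / π < k + 1 := Nat.lt_floor_add_one _
    have h1 : (k : ℝ) * π ≤ θ * m := (le_div_iff₀ pi_pos).mp hk_le
    have h2 : θ * m < ((k : ℝ) + 1) * π := by
      have := (div_lt_iff₀ pi_pos).mp hk_gt
      linarith
    have hθm : θ * m ≤ π * m := mul_le_mul_of_nonneg_right hπ hm0.le
    have hkm : (k : ℝ) ≤ m := le_of_mul_le_mul_right (by linarith) pi_pos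
    have hlow : (k : ℝ) * (π / m) ≤ θ := by
      rw [show (k : ℝ) * (π / m) = (k * π) / m by ring, div_le_iff₀ hm0]
      linarith
    have hhigh : θ ≤ ((k : ℝ) + 1) * (π / m) := by
      rw [show ((k : ℝ) + 1) * (π / m) = (((k : ℝ) + 1) * π) / m by ring, le_div_iff₀ hm0]
      nlinarith
    have hklepi : (k : ℝ) * (π / m) ≤ π := by
      calc (k : ℝ) * (π / m) ≤ (m : ℝ) * (π / m) := by nlinarith
        _ = π := by field_simp
    have hq_low : (k : ℝ) / m ≤ q θ := by
      have e1 := hqnat k (π / m) hπm_pos.le hklepi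
      have e2 : q ((k : ℝ) * (π / m)) ≤ q θ := hq_mono _ _ (by positivity) hlow hπ
      rw [e1, hqm] at e2
      calc (k : ℝ) / m = (k : ℝ) * (1 / m) := by ring
        _ ≤ q θ := e2
    have hq_high : q θ ≤ ((k : ℝ) + 1) / m := by
      by_cases hk1 : (k : ℝ) + 1 ≤ m
      · have hle2 : ((k : ℝ) + 1) * (π / m) ≤ π := by
          calc ((k : ℝ) + 1) * (π / m) ≤ (m : ℝ) * (π / m) := by nlinarith
            _ = π := by field_simp
        have e1 : q θ ≤ q (((k : ℝ) + 1) * (π / m)) := hq_mono _ _ h0 hhigh hle2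
        have e2 := hqnat (k + 1) (π / m) hπm_pos.le (by push_cast; exact hle2)
        push_cast at e2
        rw [e2, hqm] at e1
        calc q θ ≤ ((k : ℝ) + 1) * (1 / m) := e1
          _ = ((k : ℝ) + 1) / m := by ring
      · have : (1 : ℝ) ≤ ((k : ℝ) + 1) / m := by
          rw [le_div_iff₀ hm0]
          push_neg at hk1
          linarith
        linarith [hq_le_one θ]
    have hθπ_low : (k : ℝ) / m ≤ θ / π := by
      rw [div_le_div_iff₀ hm0 pi_pos]
      linarith
    have hθπ_high : θ / π ≤ ((k : ℝ) + 1) / m := by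
      rw [div_le_div_iff₀ pi_pos hm0]
      nlinarith
    have hsplit : ((k : ℝ) + 1) / m = (k : ℝ) / m + 1 / m := by ring
    rw [abs_le]
    constructor <;> [linarith [hq_high, hθπ_low]; linarith [hq_low, hθπ_high]]
  have hqθ : q θ = θ / π := by
    by_contra hne
    have habs : 0 < |q θ - θ / π| := abs_pos.mpr (sub_ne_zero.mpr hne)
    obtain ⟨m, hm⟩ := exists_nat_one_div_lt habs
    have hb := hbound (m + 1) (Nat.succ_pos m)
    have : (1 : ℝ) / ((m : ℝ) + 1) = 1 / ((m + 1 : ℕ) : ℝ) := by push_cast; ring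
    rw [this] at hm
    linarith
  have : μ (ev E1 (U θ)) = Q θ := rfl
  rw [show μ (ev E1 (cos θ • E1 + sin θ • E2)) = Q θ from rfl,
    ← ENNReal.ofReal_toReal (hQne θ)]
  rw [show (Q θ).toReal = q θ from rfl, hqθ]

end HypRound

open HypRound in
set_option maxHeartbeats 1000000 in
/-- If `u, v` are unit vectors in `ℝ^n` (`n ≥ 2`) and `r` is distributed
according to the uniform (i.e. rotation-invariant) probability measure on the unit
sphere, then the probability that a random hyperplane with normal `r` separates `u`
and `v` is `arccos ⟨u, v⟩ / π`. -/
theorem prob_hyperplane_separates_eq_arccos_div_pi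
    (n : ℕ) (hn : 2 ≤ n)
    (u v : EuclideanSpace ℝ (Fin n)) (hu : ‖u‖ = 1) (hv : ‖v‖ = 1)
    (μ : Measure (EuclideanSpace ℝ (Fin n))) [IsProbabilityMeasure μ]
    (hsphere : μ {r | ‖r‖ = 1} = 1)
    (hinv : ∀ T : EuclideanSpace ℝ (Fin n) ≃ₗᵢ[ℝ] EuclideanSpace ℝ (Fin n),
      μ.map T = μ) :
    μ {r | sgn (inner ℝ r u : ℝ) ≠ sgn (inner ℝ r v : ℝ)} =
      ENNReal.ofReal (Real.arccos (inner ℝ u v : ℝ) / π) := by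
  have huu : (inner ℝ u u : ℝ) = 1 := by rw [real_inner_self_eq_norm_sq, hu]; norm_num
  have hvv : (inner ℝ v v : ℝ) = 1 := by rw [real_inner_self_eq_norm_sq, hv]; norm_num
  set t : ℝ := (inner ℝ u v : ℝ) with htdef
  have habs : |t| ≤ 1 := by
    have := abs_real_inner_le_norm u v
    rwa [hu, hv, mul_one] at this
  have h3 : -1 ≤ t := (abs_le.mp habs).1
  have h4 : t ≤ 1 := (abs_le.mp habs).2
  by_cases h1 : t = 1
  · -- v = u
    have huv : u = v := by
      have hsq : ‖u - v‖ ^ 2 = 0 := by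
        rw [norm_sub_sq_real, hu, hv, ← htdef, h1]; norm_num
      have : u - v = 0 := by
        rw [← norm_eq_zero]
        exact pow_eq_zero_iff two_ne_zero |>.mp hsq
      exact sub_eq_zero.mp this
    have hset : {r : EuclideanSpace ℝ (Fin n) |
        sgn (inner ℝ r u : ℝ) ≠ sgn (inner ℝ r v : ℝ)} = ∅ := by
      ext r; simp [huv]
    rw [hset, measure_empty, h1, Real.arccos_one, zero_div, ENNReal.ofReal_zero]
  · by_cases h2 : t = -1
    · -- v = -u
      have hvneg : v = -u := by
        have hsq : ‖u + v‖ ^ 2 = 0 := by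
          rw [norm_add_sq_real, hu, hv, ← htdef, h2]; norm_num
        have h5 : u + v = 0 := by
          rw [← norm_eq_zero]
          exact pow_eq_zero_iff two_ne_zero |>.mp hsq
        exact eq_neg_of_add_eq_zero_left (by rwa [add_comm] at h5)
      have hset : {r : EuclideanSpace ℝ (Fin n) |
          sgn (inner ℝ r u : ℝ) ≠ sgn (inner ℝ r v : ℝ)} =
          {r : EuclideanSpace ℝ (Fin n) | (inner ℝ u r : ℝ) = 0}ᶜ := by
        ext r
        simp only [Set.mem_setOf_eq, Set.mem_compl_iff]
        rw [hvneg, inner_neg_right]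
        constructor
        · intro h h0
          apply h
          have : (inner ℝ r u : ℝ) = 0 := by rw [real_inner_comm]; exact h0
          rw [this, neg_zero]
        · intro h0
          have hne : (inner ℝ r u : ℝ) ≠ 0 := by
            rw [real_inner_comm]; exact h0
          exact fun hc => sgn_neg_ne hne hc.symm
      rw [hset, measure_compl (measurableSet_innerZero u) (measure_ne_top μ _),
        null_hyperplane μ hsphere hinv (by omega) u hu, measure_univ, tsub_zero,
        h2, Real.arccos_neg_one, div_self pi_ne_zero, ENNReal.ofReal_one]
    · -- main case
      have h5 : -1 < t := lt_of_le_of_ne h3 (Ne.symm h2)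
      have h6 : t < 1 := lt_of_le_of_ne h4 h1
      set θ := Real.arccos t with hθdef
      have hθ0 : 0 ≤ θ := Real.arccos_nonneg t
      have hθπ : θ ≤ π := Real.arccos_le_pi t
      have hcos : Real.cos θ = t := Real.cos_arccos h3 h4
      have hsin : Real.sin θ = Real.sqrt (1 - t ^ 2) := Real.sin_arccos t
      set w : EuclideanSpace ℝ (Fin n) := v - t • u with hwdef
      have hworth : (inner ℝ u w : ℝ) = 0 := by
        rw [hwdef, inner_sub_right, real_inner_smul_right, huu, ← htdef, mul_one, sub_self]
      have hvu : (inner ℝ v u : ℝ) = t := by rw [real_inner_comm]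
      have hww : (inner ℝ w w : ℝ) = 1 - t ^ 2 := by
        rw [hwdef]
        rw [inner_sub_left, inner_sub_right, inner_sub_right, real_inner_smul_left,
          real_inner_smul_left, real_inner_smul_right, real_inner_smul_right,
          huu, hvv, hvu, ← htdef]
        ring
      have hwpos : 0 < 1 - t ^ 2 := by nlinarith
      have hwnormsq : ‖w‖ ^ 2 = 1 - t ^ 2 := by rw [← real_inner_self_eq_norm_sq, hww]
      have hwnorm : ‖w‖ = Real.sqrt (1 - t ^ 2) := by
        rw [← hwnormsq, Real.sqrt_sq (norm_nonneg w)]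
      have hwne : ‖w‖ ≠ 0 := by
        rw [hwnorm]
        exact (Real.sqrt_pos.mpr hwpos).ne'
      set w1 : EuclideanSpace ℝ (Fin n) := ‖w‖⁻¹ • w with hw1def
      have hw1norm : ‖w1‖ = 1 := by
        rw [hw1def, norm_smul, norm_inv, norm_norm, inv_mul_cancel₀ hwne]
      have hw1orth : (inner ℝ u w1 : ℝ) = 0 := by
        rw [hw1def, real_inner_smul_right, hworth, mul_zero]
      obtain ⟨T, hT1, hT2⟩ := exists_iso_pair hn hu hw1norm hw1orth
      have hsinw : Real.sin θ = ‖w‖ := by rw [hsin, hwnorm]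
      have hvdecomp : Real.cos θ • u + Real.sin θ • w1 = v := by
        rw [hcos, hsinw, hw1def, smul_smul, mul_inv_cancel₀ hwne, one_smul, hwdef]
        abel
      have hTθ : T (Real.cos θ • e1v n hn + Real.sin θ • e2v n hn) = v := by
        rw [map_add, LinearIsometryEquiv.map_smul, LinearIsometryEquiv.map_smul,
          hT1, hT2, hvdecomp]
      have hQ := Q_value hn μ hsphere hinv hθ0 hθπ
      calc μ {r | sgn (inner ℝ r u : ℝ) ≠ sgn (inner ℝ r v : ℝ)}
          = μ (ev u v) := rfl
        _ = μ (ev (T (e1v n hn)) (T (Real.cos θ • e1v n hn + Real.sin θ • e2v n hn))) := by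
            rw [hT1, hTθ]
        _ = μ (ev (e1v n hn) (Real.cos θ • e1v n hn + Real.sin θ • e2v n hn)) :=
            ev_map μ hinv T _ _
        _ = ENNReal.ofReal (θ / π) := hQ
end

section
/- Let u, v be unit vectors in ℝ^n and let r be a random vector distributed uniformly on the unit sphere of ℝ^n. Then 𝔼[sign(⟨r,u⟩)·sign(⟨r,v⟩)] = 1 − (2/π)·arccos(⟨u,v⟩). -/
open MeasureTheory Real

open RealInnerProductSpace

variable {E : Type*} [NormedAddCommGroup E] [InnerProductSpace ℝ E]

noncomputable def rotFun (a b : E) (t : ℝ) (x : E) : E :=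
  x + ((Real.cos t - 1) * ⟪a, x⟫ - Real.sin t * ⟪b, x⟫) • a
    + (Real.sin t * ⟪a, x⟫ + (Real.cos t - 1) * ⟪b, x⟫) • b

variable {a b : E}

lemma inner_unit (ha : ‖a‖ = 1) : ⟪a, a⟫ = 1 := by
  rw [real_inner_self_eq_norm_sq, ha]; norm_num

lemma inner_a_rotFun (ha : ‖a‖ = 1) (hab : ⟪a, b⟫ = 0) (t : ℝ) (x : E) :
    ⟪a, rotFun a b t x⟫ = Real.cos t * ⟪a, x⟫ - Real.sin t * ⟪b, x⟫ := by
  simp [rotFun, inner_add_right, real_inner_smul_right, inner_unit ha, hab, ha]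
  ring

lemma inner_b_rotFun (hb : ‖b‖ = 1) (hab : ⟪a, b⟫ = 0) (t : ℝ) (x : E) :
    ⟪b, rotFun a b t x⟫ = Real.sin t * ⟪a, x⟫ + Real.cos t * ⟪b, x⟫ := by
  have hba : ⟪b, a⟫ = 0 := by rwa [real_inner_comm]
  simp [rotFun, inner_add_right, real_inner_smul_right, inner_unit hb, hba, hb]
  ring

lemma inner_c_rotFun {c : E} (hca : ⟪c, a⟫ = 0) (hcb : ⟪c, b⟫ = 0)
    (t : ℝ) (x : E) : ⟪c, rotFun a b t x⟫ = ⟪c, x⟫ := by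
  simp [rotFun, inner_add_right, real_inner_smul_right, hca, hcb]

lemma rotFun_fixes {c : E} (hca : ⟪a, c⟫ = 0) (hcb : ⟪b, c⟫ = 0) (t : ℝ) :
    rotFun a b t c = c := by
  simp [rotFun, hca, hcb]

lemma rotFun_a (ha : ‖a‖ = 1) (hab : ⟪a, b⟫ = 0) (t : ℝ) :
    rotFun a b t a = Real.cos t • a + Real.sin t • b := by
  have hba : ⟪b, a⟫ = 0 := by rwa [real_inner_comm]
  simp only [rotFun, inner_unit ha, hba]
  module

lemma rotFun_b (hb : ‖b‖ = 1) (hab : ⟪a, b⟫ = 0) (t : ℝ) :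
    rotFun a b t b = (-Real.sin t) • a + Real.cos t • b := by
  simp only [rotFun, inner_unit hb, hab]
  module

lemma rotFun_add (t : ℝ) (x y : E) :
    rotFun a b t (x + y) = rotFun a b t x + rotFun a b t y := by
  simp only [rotFun, inner_add_right]
  module

lemma rotFun_smul (t : ℝ) (c : ℝ) (x : E) :
    rotFun a b t (c • x) = c • rotFun a b t x := by
  simp only [rotFun, real_inner_smul_right]
  module

lemma rotFun_comp (ha : ‖a‖ = 1) (hb : ‖b‖ = 1) (hab : ⟪a, b⟫ = 0) (t s : ℝ) (x : E) :
    rotFun a b t (rotFun a b s x) = rotFun a b (t + s) x := by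
  rw [show rotFun a b t (rotFun a b s x)
      = rotFun a b s x
        + ((Real.cos t - 1) * ⟪a, rotFun a b s x⟫ - Real.sin t * ⟪b, rotFun a b s x⟫) • a
        + (Real.sin t * ⟪a, rotFun a b s x⟫ + (Real.cos t - 1) * ⟪b, rotFun a b s x⟫) • b
      from rfl]
  rw [inner_a_rotFun ha hab, inner_b_rotFun hb hab]
  simp only [rotFun, Real.cos_add, Real.sin_add]
  module

lemma rotFun_zero (x : E) : rotFun a b 0 x = x := by
  simp [rotFun]

lemma inner_rotFun_right (t : ℝ) (x y : E) :
    ⟪x, rotFun a b t y⟫ = ⟪x, y⟫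
      + ((Real.cos t - 1) * ⟪a, y⟫ - Real.sin t * ⟪b, y⟫) * ⟪x, a⟫
      + (Real.sin t * ⟪a, y⟫ + (Real.cos t - 1) * ⟪b, y⟫) * ⟪x, b⟫ := by
  simp [rotFun, inner_add_right, real_inner_smul_right]

lemma rotFun_inner (ha : ‖a‖ = 1) (hb : ‖b‖ = 1) (hab : ⟪a, b⟫ = 0) (t : ℝ) (x y : E) :
    ⟪rotFun a b t x, rotFun a b t y⟫ = ⟪x, y⟫ := by
  have hba : ⟪b, a⟫ = 0 := by rwa [real_inner_comm]
  rw [show rotFun a b t x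
      = x + ((Real.cos t - 1) * ⟪a, x⟫ - Real.sin t * ⟪b, x⟫) • a
        + (Real.sin t * ⟪a, x⟫ + (Real.cos t - 1) * ⟪b, x⟫) • b from rfl]
  simp only [inner_add_left, real_inner_smul_left, inner_a_rotFun ha hab,
    inner_b_rotFun hb hab, inner_rotFun_right,
    inner_unit ha, inner_unit hb, hab, hba,
    real_inner_comm a x, real_inner_comm b x, real_inner_comm a y, real_inner_comm b y]
  have h := Real.sin_sq_add_cos_sq t
  linear_combination (⟪a,x⟫ * ⟪a,y⟫ + ⟪b,x⟫ * ⟪b,y⟫) * h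

noncomputable def rotEquiv (a b : E) (ha : ‖a‖ = 1) (hb : ‖b‖ = 1) (hab : ⟪a, b⟫ = 0)
    (t : ℝ) : E ≃ₗᵢ[ℝ] E :=
  { toFun := rotFun a b t
    invFun := rotFun a b (-t)
    map_add' := rotFun_add t
    map_smul' := rotFun_smul t
    left_inv := fun x => by
      show rotFun a b (-t) (rotFun a b t x) = x
      rw [rotFun_comp ha hb hab, neg_add_cancel, rotFun_zero]
    right_inv := fun x => by
      show rotFun a b t (rotFun a b (-t) x) = x
      rw [rotFun_comp ha hb hab, add_neg_cancel, rotFun_zero]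
    norm_map' := fun x => by
      show ‖rotFun a b t x‖ = ‖x‖
      have h := rotFun_inner ha hb hab t x x
      rw [real_inner_self_eq_norm_sq, real_inner_self_eq_norm_sq] at h
      nlinarith [norm_nonneg (rotFun a b t x), norm_nonneg x] }

lemma rotEquiv_apply (a b : E) (ha : ‖a‖ = 1) (hb : ‖b‖ = 1) (hab : ⟪a, b⟫ = 0)
    (t : ℝ) (x : E) : rotEquiv a b ha hb hab t x = rotFun a b t x := rfl

section Null

variable {n : ℕ}

local notation "Euc" => EuclideanSpace ℝ (Fin n)

lemma preimage_measure_eq (μ : Measure Euc)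
    (hinv : ∀ T : Euc ≃ₗᵢ[ℝ] Euc, μ.map T = μ)
    (T : Euc ≃ₗᵢ[ℝ] Euc) {S : Set Euc} (hS : MeasurableSet S) :
    μ (T ⁻¹' S) = μ S := by
  conv_rhs => rw [← hinv T]
  rw [Measure.map_apply T.continuous.measurable hS]

lemma sphere_compl_null (μ : Measure Euc) [IsProbabilityMeasure μ]
    (hsphere : μ {r : Euc | ‖r‖ = 1} = 1) :
    μ {r : Euc | ‖r‖ = 1}ᶜ = 0 := by
  have hm : MeasurableSet {r : Euc | ‖r‖ = 1} :=
    (isClosed_eq continuous_norm continuous_const).measurableSet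
  rw [measure_compl hm (measure_ne_top μ _), hsphere, measure_univ, tsub_self]

lemma inner_set_measurable (w : Euc) : MeasurableSet {r : Euc | ⟪w, r⟫ = 0} :=
  (isClosed_eq (innerSL ℝ w).continuous continuous_const).measurableSet

lemma ortho_inter_null (μ : Measure Euc) [IsProbabilityMeasure μ]
    (hsphere : μ {r : Euc | ‖r‖ = 1} = 1)
    (hinv : ∀ T : Euc ≃ₗᵢ[ℝ] Euc, μ.map T = μ) :
    ∀ (j m : ℕ), 1 ≤ m → n ≤ m + j → ∀ (w : Fin m → Euc), Orthonormal ℝ w →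
      μ {r : Euc | ∀ i, ⟪w i, r⟫ = 0} = 0 := by
  intro j
  induction j with
  | zero =>
    intro m hm hnm w hw
    -- m = n, the set is {0}
    have hcard : m ≤ n := by
      simpa [finrank_euclideanSpace, Fintype.card_fin] using
        hw.linearIndependent.fintype_card_le_finrank
    have hmn : m = n := le_antisymm hcard (by simpa using hnm)
    have hspan : Submodule.span ℝ (Set.range w) = ⊤ := by
      have : Nonempty (Fin m) := ⟨⟨0, hm⟩⟩
      apply hw.linearIndependent.span_eq_top_of_card_eq_finrank
      simp [finrank_euclideanSpace, Fintype.card_fin, hmn]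
    have hsub : {r : Euc | ∀ i, ⟪w i, r⟫ = 0} ⊆ {(0 : Euc)} := by
      intro r hr
      have hr' : ∀ x ∈ Submodule.span ℝ (Set.range w), ⟪x, r⟫ = 0 := by
        intro x hx
        induction hx using Submodule.span_induction with
        | mem x hx => obtain ⟨i, rfl⟩ := hx; exact hr i
        | zero => simp
        | add x y _ _ hx hy => rw [inner_add_left, hx, hy]; ring
        | smul c x _ hx => rw [real_inner_smul_left, hx]; ring
      have : ⟪r, r⟫ = 0 := hr' r (hspan ▸ Submodule.mem_top)
      simpa using inner_self_eq_zero.mp this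
    refine le_antisymm (le_trans (measure_mono ?_) (le_of_eq (sphere_compl_null μ hsphere)))
      (by simp)
    intro r hr
    have : r = 0 := hsub hr
    simp [this]
  | succ j ih =>
    intro m hm hnm w hw
    by_cases hle : n ≤ m + j
    · exact ih m hm hle w hw
    push_neg at hle
    have hmn : m < n := by omega
    -- find a unit vector b orthogonal to all w i
    have hspan_ne : Submodule.span ℝ (Set.range w) ≠ ⊤ := by
      intro h
      have h1 : Module.finrank ℝ (Submodule.span ℝ (Set.range w)) ≤ m := by
        simpa [Set.finrank] using finrank_range_le_card (R := ℝ) w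
      rw [h, finrank_top, finrank_euclideanSpace, Fintype.card_fin] at h1
      omega
    obtain ⟨b₀, hb₀mem, hb₀⟩ :=
      Submodule.exists_mem_ne_zero_of_ne_bot
        (mt Submodule.orthogonal_eq_bot_iff.mp hspan_ne)
    set b : Euc := ‖b₀‖⁻¹ • b₀ with hbdef
    have hb : ‖b‖ = 1 := by
      rw [hbdef, norm_smul, norm_inv, norm_norm,
        inv_mul_cancel₀ (norm_ne_zero_iff.mpr hb₀)]
    have hbmem : b ∈ (Submodule.span ℝ (Set.range w))ᗮ :=
      Submodule.smul_mem _ _ hb₀mem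
    have hwb : ∀ i, ⟪w i, b⟫ = 0 := fun i =>
      (Submodule.mem_orthogonal _ _).mp hbmem (w i)
        (Submodule.subset_span ⟨i, rfl⟩)
    -- orthonormal extension
    have hw' : Orthonormal ℝ (Fin.cons b w : Fin (m + 1) → Euc) := by
      rw [orthonormal_iff_ite]
      intro i j
      refine Fin.cases ?_ (fun i' => ?_) i <;> refine Fin.cases ?_ (fun j' => ?_) j
      · simp [inner_unit hb, hb]
      · rw [Fin.cons_zero, Fin.cons_succ, if_neg (Fin.succ_ne_zero j').symm,
          real_inner_comm]
        exact hwb j'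
      · simp [Fin.succ_ne_zero i', hwb i']
      · simpa [Fin.succ_inj] using orthonormal_iff_ite.mp hw i' j'
    set w' : Fin (m + 1) → Euc := Fin.cons b w with hw'def
    set K : Set Euc := {r | ∀ i : Fin (m + 1), ⟪w' i, r⟫ = 0} with hKdef
    have hμK : μ K = 0 := ih (m + 1) (by omega) (by omega) _ hw'
    have hKmem : ∀ r, r ∈ K ↔ (⟪b, r⟫ = 0 ∧ ∀ i, ⟪w i, r⟫ = 0) := by
      intro r
      constructor
      · intro h
        exact ⟨by simpa [hw'def] using h 0, fun i => by simpa [hw'def, Fin.cons_succ] using h i.succ⟩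
      · intro h i
        refine Fin.cases ?_ (fun i' => ?_) i
        · simpa [hw'def] using h.1
        · simpa [hw'def, Fin.cons_succ] using h.2 i'
    have hKmeas : MeasurableSet K := by
      rw [hKdef, Set.setOf_forall]
      exact MeasurableSet.iInter fun i => inner_set_measurable _
    set i₀ : Fin m := ⟨0, hm⟩ with hi₀
    set a : Euc := w i₀ with hadef
    have ha : ‖a‖ = 1 := hw.1 i₀
    have hab : ⟪a, b⟫ = 0 := hwb i₀
    set H : ℝ → Set Euc := fun t => {r | (∀ i, i ≠ i₀ → ⟪w i, r⟫ = 0) ∧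
      Real.cos t * ⟪a, r⟫ + Real.sin t * ⟪b, r⟫ = 0} with hHdef
    have hH0 : H 0 = {r : Euc | ∀ i, ⟪w i, r⟫ = 0} := by
      ext r
      simp only [hHdef, Real.cos_zero, Real.sin_zero, one_mul, zero_mul, add_zero,
        Set.mem_setOf_eq]
      constructor
      · rintro ⟨h1, h2⟩ i
        by_cases hi : i = i₀
        · rw [hi]; exact h2
        · exact h1 i hi
      · intro h
        exact ⟨fun i _ => h i, h i₀⟩
    have hHmeas : ∀ t, MeasurableSet (H t) := by
      intro t
      rw [hHdef]
      simp only [Set.setOf_and]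
      apply MeasurableSet.inter
      · rw [Set.setOf_forall]
        refine MeasurableSet.iInter fun i => ?_
        rw [Set.setOf_forall]
        exact MeasurableSet.iInter fun _ => inner_set_measurable _
      · refine (isClosed_eq ?_ continuous_const).measurableSet
        exact ((continuous_const.mul (innerSL ℝ a).continuous).add
          (continuous_const.mul (innerSL ℝ b).continuous))
    have hHinv : ∀ t, μ (H t) = μ (H 0) := by
      intro t
      have hpre : (rotEquiv a b ha hb hab t) ⁻¹' (H t) = H 0 := by
        ext r
        simp only [Set.mem_preimage, rotEquiv_apply, hHdef, Set.mem_setOf_eq]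
        have e1 : ∀ i, i ≠ i₀ → ⟪w i, rotFun a b t r⟫ = ⟪w i, r⟫ := fun i hi =>
          inner_c_rotFun (hw.2 hi) (hwb i) t r
        have e2 : Real.cos t * ⟪a, rotFun a b t r⟫ + Real.sin t * ⟪b, rotFun a b t r⟫
            = ⟪a, r⟫ := by
          rw [inner_a_rotFun ha hab, inner_b_rotFun hb hab]
          have h := Real.sin_sq_add_cos_sq t
          linear_combination ⟪a, r⟫ * h
        constructor
        · rintro ⟨h1, h2⟩
          refine ⟨fun i hi => by rw [← e1 i hi]; exact h1 i hi, ?_⟩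
          simp only [Real.cos_zero, Real.sin_zero, one_mul, zero_mul, add_zero]
          rw [← e2]; exact h2
        · rintro ⟨h1, h2⟩
          simp only [Real.cos_zero, Real.sin_zero, one_mul, zero_mul, add_zero] at h2
          exact ⟨fun i hi => (e1 i hi).trans (h1 i hi), e2.trans h2⟩
      rw [← hpre, preimage_measure_eq μ hinv _ (hHmeas t)]
    -- pairwise intersections land in K
    have hKsub : ∀ t s, Real.sin (t - s) ≠ 0 → ∀ r, r ∈ H t → r ∈ H s → r ∈ K := by
      intro t s hts r hrt hrs
      obtain ⟨h1, h2t⟩ := hrt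
      obtain ⟨_, h2s⟩ := hrs
      have hA : ⟪a, r⟫ = 0 := by
        have h : Real.sin (t - s) * ⟪a, r⟫ = 0 := by
          rw [Real.sin_sub]
          linear_combination Real.sin t * h2s - Real.sin s * h2t
        exact (mul_eq_zero.mp h).resolve_left hts
      have hB : ⟪b, r⟫ = 0 := by
        have h : Real.sin (t - s) * ⟪b, r⟫ = 0 := by
          rw [Real.sin_sub]
          linear_combination Real.cos s * h2t - Real.cos t * h2s
        exact (mul_eq_zero.mp h).resolve_left hts
      refine (hKmem r).mpr ⟨hB, fun i => ?_⟩
      by_cases hi : i = i₀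
      · rw [hi]; exact hA
      · exact h1 i hi
    -- the angles
    set θ : ℕ → ℝ := fun k => π / (k + 2) with hθdef
    have hθpos : ∀ k, 0 < θ k := fun k => by positivity
    have hθle : ∀ k, θ k ≤ π / 2 := by
      intro k
      rw [hθdef]
      apply div_le_div_of_nonneg_left pi_pos.le two_pos
      · exact_mod_cast by omega
    have hθinj : Function.Injective θ := by
      intro k l h
      rw [hθdef] at h
      have : ((k : ℝ) + 2) = ((l : ℝ) + 2) := by
        have h' : π / ((k:ℝ)+2) = π / ((l:ℝ)+2) := h
        rw [div_eq_div_iff (by positivity) (by positivity)] at h'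
        exact mul_left_cancel₀ pi_ne_zero (by linarith)
      have h2 : (k : ℝ) = l := by linarith
      exact_mod_cast h2
    have hsin : ∀ k l : ℕ, k ≠ l → Real.sin (θ k - θ l) ≠ 0 := by
      intro k l hkl h0
      rw [Real.sin_eq_zero_iff_of_lt_of_lt
        (by nlinarith [hθpos k, hθpos l, hθle k, hθle l, pi_pos])
        (by nlinarith [hθpos k, hθpos l, hθle k, hθle l, pi_pos])] at h0
      exact hkl (hθinj (sub_eq_zero.mp h0))
    set D : ℕ → Set Euc := fun k => H (θ k) \ K with hDdef
    have hDmeas : ∀ k, MeasurableSet (D k) := fun k => (hHmeas _).diff hKmeas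
    have hDdisj : Pairwise (Function.onFun Disjoint D) := by
      intro k l hkl
      rw [Function.onFun, Set.disjoint_left]
      rintro r ⟨hrk, hrK⟩ ⟨hrl, _⟩
      exact hrK (hKsub _ _ (hsin k l hkl) r hrk hrl)
    have hDm : ∀ k, μ (D k) = μ (H 0) := fun k => by
      rw [hDdef]; rw [measure_diff_null hμK, hHinv]
    have hsum : ∑' _ : ℕ, μ (H 0) ≤ 1 := by
      calc ∑' k : ℕ, μ (H 0) = ∑' k : ℕ, μ (D k) := tsum_congr fun k => (hDm k).symm
        _ = μ (⋃ k, D k) := (measure_iUnion hDdisj hDmeas).symm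
        _ ≤ 1 := prob_le_one
    rw [← hH0]
    by_contra h0
    rw [ENNReal.tsum_const_eq_top_of_ne_zero h0] at hsum
    exact absurd hsum (by simp)

lemma hyperplane_null (μ : Measure Euc) [IsProbabilityMeasure μ]
    (hsphere : μ {r : Euc | ‖r‖ = 1} = 1)
    (hinv : ∀ T : Euc ≃ₗᵢ[ℝ] Euc, μ.map T = μ)
    (w : Euc) (hw : ‖w‖ = 1) : μ {r : Euc | ⟪w, r⟫ = 0} = 0 := by
  have h := ortho_inter_null μ hsphere hinv n 1 le_rfl (by omega)
    (fun _ : Fin 1 => w) ?_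
  · rw [show {r : Euc | ⟪w, r⟫ = 0} = {r : Euc | ∀ _i : Fin 1, ⟪w, r⟫ = 0} from
      by ext r; simp]
    exact h
  · rw [orthonormal_iff_ite]
    intro i j
    rw [Subsingleton.elim i j, if_pos rfl]
    exact inner_unit hw

lemma exists_unit_orthogonal (hn : 2 ≤ n) (u : Euc) :
    ∃ b : Euc, ‖b‖ = 1 ∧ ⟪u, b⟫ = 0 := by
  have hspan_ne : Submodule.span ℝ ({u} : Set Euc) ≠ ⊤ := by
    intro h
    have h1 : Module.finrank ℝ (Submodule.span ℝ ({u} : Set Euc)) ≤ 1 := by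
      simpa using finrank_span_le_card (R := ℝ) ({u} : Set Euc)
    rw [h, finrank_top, finrank_euclideanSpace, Fintype.card_fin] at h1
    omega
  obtain ⟨b₀, hb₀mem, hb₀⟩ :=
    Submodule.exists_mem_ne_zero_of_ne_bot
      (mt Submodule.orthogonal_eq_bot_iff.mp hspan_ne)
  refine ⟨‖b₀‖⁻¹ • b₀, ?_, ?_⟩
  · rw [norm_smul, norm_inv, norm_norm, inv_mul_cancel₀ (norm_ne_zero_iff.mpr hb₀)]
  · have := (Submodule.mem_orthogonal _ _).mp (Submodule.smul_mem _ ‖b₀‖⁻¹ hb₀mem) u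
      (Submodule.subset_span rfl)
    exact this

end Null

section RealLemmas

lemma sin_zero_cases {s : ℝ} (h0 : 0 ≤ s) (hπ : s ≤ π) (h : Real.sin s = 0) :
    s = 0 ∨ s = π := by
  by_contra hc
  push_neg at hc
  exact absurd h (ne_of_gt (Real.sin_pos_of_pos_of_lt_pi
    (lt_of_le_of_ne h0 (Ne.symm hc.1)) (lt_of_le_of_ne hπ hc.2)))

lemma signrel {p q : ℝ} (hp : p ≠ 0) (hq : q ≠ 0) :
    ¬(0 ≤ p ↔ 0 ≤ q) ↔ p * q < 0 := by
  rcases hp.lt_or_gt with h | h <;> rcases hq.lt_or_gt with h' | h'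
  · constructor
    · intro hx; exact absurd (iff_of_false (not_le.mpr h) (not_le.mpr h')) hx
    · intro hx; nlinarith
  · constructor
    · intro _; nlinarith
    · intro _ hiff; exact absurd (hiff.mpr h'.le) (not_le.mpr h)
  · constructor
    · intro _; nlinarith
    · intro _ hiff; exact absurd (hiff.mp h.le) (not_le.mpr h')
  · constructor
    · intro hx; exact absurd (iff_of_true h.le h'.le) hx
    · intro hx; nlinarith

lemma no_double_flip {s t g0 gs gst : ℝ} (hs : 0 ≤ s) (ht : 0 ≤ t) (hstπ : s + t ≤ π)
    (key : Real.sin t * g0 + Real.sin s * gst = Real.sin (s + t) * gs)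
    (hs0 : s = 0 → g0 = gs) (ht0 : t = 0 → gs = gst)
    (h1 : g0 * gs < 0) (h2 : gs * gst < 0) : False := by
  have hsins : 0 ≤ Real.sin s := Real.sin_nonneg_of_nonneg_of_le_pi hs (by linarith)
  have hsint : 0 ≤ Real.sin t := Real.sin_nonneg_of_nonneg_of_le_pi ht (by linarith)
  have hsinst : 0 ≤ Real.sin (s + t) :=
    Real.sin_nonneg_of_nonneg_of_le_pi (by linarith) hstπ
  have hgs : gs ≠ 0 := by intro h; rw [h] at h1; simp at h1
  have hg0 : g0 ≠ 0 := by intro h; rw [h] at h1; simp at h1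
  have hsint0 : Real.sin t = 0 := by
    rcases hgs.lt_or_gt with hgsneg | hgspos
    · -- gs < 0, so g0 > 0, gst > 0
      have hg0pos : 0 < g0 := by nlinarith
      have hgstpos : 0 < gst := by nlinarith
      have e1 : Real.sin t * g0 = 0 := by nlinarith
      rcases mul_eq_zero.mp e1 with h | h
      · exact h
      · exact absurd h (ne_of_gt hg0pos)
    · -- gs > 0, so g0 < 0, gst < 0
      have hg0neg : g0 < 0 := by nlinarith
      have hgstneg : gst < 0 := by nlinarith
      have e1 : Real.sin t * g0 = 0 := by nlinarith
      rcases mul_eq_zero.mp e1 with h | h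
      · exact h
      · exact absurd h (ne_of_lt hg0neg)
  rcases sin_zero_cases ht (by linarith) hsint0 with h | h
  · rw [ht0 h] at h2; nlinarith
  · have hseq : s = 0 := by linarith
    rw [hs0 hseq] at h1; nlinarith

lemma eq_zero_of_abs_le_inv {x : ℝ} (h : ∀ m : ℕ, 1 ≤ m → |x| ≤ 1 / m) : x = 0 := by
  by_contra hx
  have habs : 0 < |x| := abs_pos.mpr hx
  obtain ⟨m, hm⟩ := exists_nat_gt (1 / |x|)
  have hm1 : 1 ≤ m := by
    by_contra h'
    push_neg at h'
    interval_cases m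
    · simp at hm; nlinarith [one_div_pos.mpr habs]
  have := h m hm1
  have hmpos : (0:ℝ) < m := by exact_mod_cast hm1
  rw [div_lt_iff₀ habs] at hm
  rw [le_div_iff₀ hmpos] at this
  nlinarith

end RealLemmas

section Main

variable {n : ℕ}

local notation "Euc" => EuclideanSpace ℝ (Fin n)

set_option maxHeartbeats 2000000 in
lemma measure_AA (μ : Measure Euc) [IsProbabilityMeasure μ]
    (hsphere : μ {r : Euc | ‖r‖ = 1} = 1)
    (hinv : ∀ T : Euc ≃ₗᵢ[ℝ] Euc, μ.map T = μ)
    (a b : Euc) (ha : ‖a‖ = 1) (hb : ‖b‖ = 1) (hab : ⟪a, b⟫ = 0)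
    (γ : ℝ) (hγ0 : 0 ≤ γ) (hγπ : γ ≤ π) :
    (μ {r : Euc | ¬(0 ≤ ⟪a, r⟫ ↔ 0 ≤ ⟪Real.cos γ • a + Real.sin γ • b, r⟫)}).toReal
      = γ / π := by
  have hba : ⟪b, a⟫ = 0 := by rwa [real_inner_comm]
  set wv : ℝ → Euc := fun t => Real.cos t • a + Real.sin t • b with hwv
  have hg : ∀ t r, ⟪wv t, r⟫ = Real.cos t * ⟪a, r⟫ + Real.sin t * ⟪b, r⟫ := by
    intro t r
    simp only [hwv, inner_add_left, real_inner_smul_left]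
  have hwvunit : ∀ t, ‖wv t‖ = 1 := by
    intro t
    have h2 : ‖wv t‖ ^ 2 = 1 := by
      rw [← real_inner_self_eq_norm_sq]
      simp only [hwv, inner_add_left, inner_add_right, real_inner_smul_left,
        real_inner_smul_right, inner_unit ha, inner_unit hb, hab, hba]
      nlinarith [Real.sin_sq_add_cos_sq t]
    have h3 : (‖wv t‖ - 1) * (‖wv t‖ + 1) = 0 := by linear_combination h2
    rcases mul_eq_zero.mp h3 with h | h
    · linarith
    · nlinarith [norm_nonneg (wv t)]
  set AA : ℝ → ℝ → Set Euc :=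
    fun α β => {r | ¬(0 ≤ ⟪wv α, r⟫ ↔ 0 ≤ ⟪wv β, r⟫)} with hAA
  have hAAmeas : ∀ α β, MeasurableSet (AA α β) := by
    intro α β
    have hS : ∀ t, MeasurableSet {r : Euc | 0 ≤ ⟪wv t, r⟫} := fun t =>
      (isClosed_le continuous_const (innerSL ℝ (wv t)).continuous).measurableSet
    have : AA α β = ({r : Euc | 0 ≤ ⟪wv α, r⟫} ∩ {r : Euc | 0 ≤ ⟪wv β, r⟫}ᶜ)
        ∪ ({r : Euc | 0 ≤ ⟪wv α, r⟫}ᶜ ∩ {r : Euc | 0 ≤ ⟪wv β, r⟫}) := by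
      ext r
      simp only [hAA, Set.mem_setOf_eq, Set.mem_union, Set.mem_inter_iff,
        Set.mem_compl_iff]
      tauto
    rw [this]
    exact (((hS α).inter (hS β).compl).union ((hS α).compl.inter (hS β)))
  have hN : ∀ t, μ {r : Euc | ⟪wv t, r⟫ = 0} = 0 := fun t =>
    hyperplane_null μ hsphere hinv _ (hwvunit t)
  have hrotwv : ∀ t α, rotFun a b t (wv α) = wv (α + t) := by
    intro t α
    rw [hwv]
    simp only
    rw [rotFun_add, rotFun_smul, rotFun_smul, rotFun_a ha hab, rotFun_b hb hab,
      Real.cos_add, Real.sin_add]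
    module
  have htrans : ∀ α β t, μ (AA α β) = μ (AA (α + t) (β + t)) := by
    intro α β t
    have hpre : (rotEquiv a b ha hb hab t) ⁻¹' (AA (α + t) (β + t)) = AA α β := by
      ext r
      simp only [Set.mem_preimage, rotEquiv_apply, hAA, Set.mem_setOf_eq]
      rw [show ⟪wv (α + t), rotFun a b t r⟫ = ⟪wv α, r⟫ from by
          rw [← hrotwv t α]; exact rotFun_inner ha hb hab t _ r,
        show ⟪wv (β + t), rotFun a b t r⟫ = ⟪wv β, r⟫ from by
          rw [← hrotwv t β]; exact rotFun_inner ha hb hab t _ r]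
    rw [← hpre, preimage_measure_eq μ hinv _ (hAAmeas _ _)]
  have hadd : ∀ s t, 0 ≤ s → 0 ≤ t → s + t ≤ π →
      μ (AA 0 (s + t)) = μ (AA 0 s) + μ (AA s (s + t)) := by
    intro s t hs ht hstπ
    set N : Set Euc := {r | ⟪wv 0, r⟫ = 0} ∪ {r | ⟪wv s, r⟫ = 0}
      ∪ {r | ⟪wv (s + t), r⟫ = 0} with hNdef
    have hμN : μ N = 0 := by
      rw [hNdef]
      rw [measure_union_null_iff, measure_union_null_iff]
      exact ⟨⟨hN 0, hN s⟩, hN (s + t)⟩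
    have hkey : ∀ r : Euc, Real.sin t * ⟪wv 0, r⟫ + Real.sin s * ⟪wv (s + t), r⟫
        = Real.sin (s + t) * ⟪wv s, r⟫ := by
      intro r
      rw [hg, hg, hg, Real.sin_add, Real.cos_add, Real.sin_zero, Real.cos_zero]
      linear_combination (-(Real.sin t * ⟪a, r⟫)) * Real.sin_sq_add_cos_sq s
    have hexcl : ∀ r, r ∉ N → ¬(r ∈ AA 0 s ∧ r ∈ AA s (s + t)) := by
      rintro r hrN ⟨h1, h2⟩
      have hnz : ⟪wv 0, r⟫ ≠ 0 ∧ ⟪wv s, r⟫ ≠ 0 ∧ ⟪wv (s + t), r⟫ ≠ 0 := by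
        simp only [hNdef, Set.mem_union, Set.mem_setOf_eq, not_or] at hrN
        tauto
      have h1' : ⟪wv 0, r⟫ * ⟪wv s, r⟫ < 0 :=
        (signrel hnz.1 hnz.2.1).mp h1
      have h2' : ⟪wv s, r⟫ * ⟪wv (s + t), r⟫ < 0 :=
        (signrel hnz.2.1 hnz.2.2).mp h2
      exact no_double_flip hs ht hstπ (hkey r)
        (fun h => by rw [show (0:ℝ) = s from h.symm])
        (fun h => by rw [show s + t = s from by rw [h, add_zero]])
        h1' h2'
    have hsub1 : AA 0 (s + t) ⊆ AA 0 s ∪ AA s (s + t) := by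
      intro r hr
      simp only [hAA, Set.mem_setOf_eq, Set.mem_union] at *
      tauto
    have hsub2 : ∀ r, r ∉ N → r ∈ AA 0 s ∪ AA s (s + t) → r ∈ AA 0 (s + t) := by
      intro r hrN hr
      have hnb := hexcl r hrN
      simp only [hAA, Set.mem_setOf_eq, Set.mem_union] at *
      tauto
    have e1 : μ (AA 0 s ∪ AA s (s + t)) = μ (AA 0 (s + t)) := by
      apply le_antisymm
      · calc μ (AA 0 s ∪ AA s (s + t)) ≤ μ (AA 0 (s + t) ∪ N) := by
              apply measure_mono
              intro r hr
              by_cases hrN : r ∈ N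
              · exact Or.inr hrN
              · exact Or.inl (hsub2 r hrN hr)
          _ = μ (AA 0 (s + t)) := by
              refine le_antisymm ?_ (measure_mono Set.subset_union_left)
              calc μ (AA 0 (s + t) ∪ N) ≤ μ (AA 0 (s + t)) + μ N :=
                    measure_union_le _ _
                _ = μ (AA 0 (s + t)) := by rw [hμN, add_zero]
      · exact measure_mono hsub1
    have e2 : μ (AA 0 s ∩ AA s (s + t)) = 0 := by
      refine le_antisymm (le_trans (measure_mono ?_) hμN.le) (by simp)
      intro r hr
      by_contra hrN
      exact hexcl r hrN ⟨hr.1, hr.2⟩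
    have e3 := measure_union_add_inter (AA 0 s) (hAAmeas s (s + t)) (μ := μ)
    rw [e2, add_zero, e1] at e3
    exact e3
  set F : ℝ → ℝ := fun x => (μ (AA 0 x)).toReal with hF
  have hFadd : ∀ s t, 0 ≤ s → 0 ≤ t → s + t ≤ π → F (s + t) = F s + F t := by
    intro s t hs ht hstπ
    have htr : μ (AA s (s + t)) = μ (AA 0 t) := by
      rw [htrans 0 t s, zero_add, add_comm t s]
    show (μ (AA 0 (s + t))).toReal = (μ (AA 0 s)).toReal + (μ (AA 0 t)).toReal
    rw [hadd s t hs ht hstπ, htr, ENNReal.toReal_add (measure_ne_top μ _)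
      (measure_ne_top μ _)]
  have hF0 : F 0 = 0 := by
    have : AA 0 0 = ∅ := by
      ext r; simp [hAA]
    show (μ (AA 0 0)).toReal = 0
    rw [this]; simp
  have hFπ : F π = 1 := by
    have hAA0π : AA 0 π = {r : Euc | ⟪wv 0, r⟫ = 0}ᶜ := by
      ext r
      simp only [hAA, Set.mem_setOf_eq, Set.mem_compl_iff]
      have hgπ : ⟪wv π, r⟫ = -⟪wv 0, r⟫ := by
        rw [hg, hg]; simp
      rw [hgπ]
      constructor
      · intro h h0
        exact h (by rw [h0]; simp)
      · intro h0 hiff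
        rcases lt_trichotomy (⟪wv 0, r⟫) 0 with hc | hc | hc
        · have := hiff.mpr (by linarith); linarith
        · exact h0 hc
        · have := hiff.mp (by linarith); linarith
    show (μ (AA 0 π)).toReal = 1
    rw [hAA0π]
    rw [measure_compl (inner_set_measurable (wv 0)) (measure_ne_top μ _), hN 0,
      measure_univ]
    simp
  have hFnonneg : ∀ x, 0 ≤ F x := fun x => ENNReal.toReal_nonneg
  have hFmono : ∀ x y, 0 ≤ x → x ≤ y → y ≤ π → F x ≤ F y := by
    intro x y hx hxy hyπ
    have := hFadd x (y - x) hx (by linarith) (by linarith)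
    rw [show x + (y - x) = y from by ring] at this
    have := hFnonneg (y - x)
    linarith
  have hFnat : ∀ (k : ℕ) (x : ℝ), 0 ≤ x → (k : ℝ) * x ≤ π → F ((k : ℝ) * x) = k * F x := by
    intro k
    induction k with
    | zero => intro x hx _; simp [hF0]
    | succ k ih =>
      intro x hx hkx
      have hkx' : (k : ℝ) * x ≤ π := by
        have : (k : ℝ) * x ≤ (k + 1 : ℝ) * x := by nlinarith
        push_cast at hkx
        nlinarith
      have := hFadd ((k : ℝ) * x) x (by positivity) hx (by push_cast at hkx ⊢; nlinarith)
      push_cast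
      rw [show ((k : ℝ) + 1) * x = (k : ℝ) * x + x from by ring, this, ih x hx hkx']
      ring
  have hFdiv : ∀ m : ℕ, 1 ≤ m → F (π / m) = 1 / m := by
    intro m hm
    have hmpos : (0 : ℝ) < m := by exact_mod_cast hm
    have := hFnat m (π / m) (by positivity) (by rw [mul_div_cancel₀]; positivity)
    rw [mul_div_cancel₀ _ (ne_of_gt hmpos), hFπ] at this
    field_simp at this ⊢
    linarith
  -- now show F γ = γ / π
  have hFγ : F γ = γ / π := by
    by_cases hγeq : γ = π
    · rw [hγeq, hFπ, div_self pi_ne_zero]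
    have hγlt : γ < π := lt_of_le_of_ne hγπ hγeq
    have habs : ∀ m : ℕ, 1 ≤ m → |F γ - γ / π| ≤ 1 / m := by
      intro m hm
      have hmpos : (0 : ℝ) < m := by exact_mod_cast hm
      set k : ℕ := ⌊γ * m / π⌋₊ with hk
      have hknn : 0 ≤ γ * m / π := by positivity
      have hkle : (k : ℝ) ≤ γ * m / π := Nat.floor_le hknn
      have hklt : γ * m / π < k + 1 := Nat.lt_floor_add_one _
      have hkm : k + 1 ≤ m := by
        have : γ * m / π < m := by
          rw [div_lt_iff₀ pi_pos]
          nlinarith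
        have : (k : ℝ) < m := lt_of_le_of_lt hkle this
        exact_mod_cast Nat.succ_le_of_lt (by exact_mod_cast this)
      have h1 : (k : ℝ) * π ≤ γ * m := by
        rw [le_div_iff₀ pi_pos] at hkle; linarith
      have h2 : γ * m < ((k : ℝ) + 1) * π := by
        rw [div_lt_iff₀ pi_pos] at hklt; linarith
      have hlow : (k : ℝ) * (π / m) ≤ γ := by
        rw [show (k : ℝ) * (π / m) = (k : ℝ) * π / m from by ring, div_le_iff₀ hmpos]
        linarith
      have hhigh : γ ≤ ((k : ℝ) + 1) * (π / m) := by
        rw [show ((k : ℝ) + 1) * (π / m) = ((k : ℝ) + 1) * π / m from by ring,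
          le_div_iff₀ hmpos]
        linarith
      have hhighπ : ((k : ℝ) + 1) * (π / m) ≤ π := by
        have : ((k : ℝ) + 1) ≤ m := by exact_mod_cast hkm
        calc ((k : ℝ) + 1) * (π / m) ≤ (m : ℝ) * (π / m) := by
              apply mul_le_mul_of_nonneg_right this (by positivity)
          _ = π := by field_simp
      have hFlow : (k : ℝ) / m ≤ F γ := by
        have h1 := hFmono ((k : ℝ) * (π / m)) γ (by positivity) hlow hγπ
        rw [hFnat k (π / m) (by positivity) (le_trans hlow hγπ), hFdiv m hm] at h1
        calc (k : ℝ) / m = (k : ℝ) * (1 / m) := by ring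
          _ ≤ F γ := h1
      have hFhigh : F γ ≤ ((k : ℝ) + 1) / m := by
        have h1 := hFmono γ (((k : ℝ) + 1) * (π / m)) hγ0 hhigh hhighπ
        have h2 : F (((k : ℝ) + 1) * (π / m)) = ((k : ℝ) + 1) * (1 / m) := by
          have := hFnat (k + 1) (π / m) (by positivity) (by push_cast; exact hhighπ)
          push_cast at this
          rw [this, hFdiv m hm]
        rw [h2] at h1
        calc F γ ≤ ((k : ℝ) + 1) * (1 / m) := h1
          _ = ((k : ℝ) + 1) / m := by ring
      have hγlow : (k : ℝ) / m ≤ γ / π := by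
        rw [div_le_div_iff₀ hmpos pi_pos]
        linarith
      have hγhigh : γ / π ≤ ((k : ℝ) + 1) / m := by
        rw [div_le_div_iff₀ pi_pos hmpos]
        linarith
      rw [abs_le]
      constructor
      · have : ((k : ℝ) + 1) / m - (k : ℝ) / m = 1 / m := by field_simp; ring
        linarith
      · have : ((k : ℝ) + 1) / m - (k : ℝ) / m = 1 / m := by field_simp; ring
        linarith
    have := eq_zero_of_abs_le_inv habs
    linarith
  -- identify the goal set with AA 0 γ
  have hset : {r : Euc | ¬(0 ≤ ⟪a, r⟫ ↔ 0 ≤ ⟪Real.cos γ • a + Real.sin γ • b, r⟫)}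
      = AA 0 γ := by
    ext r
    simp only [hAA, Set.mem_setOf_eq, hwv]
    rw [Real.cos_zero, Real.sin_zero]
    norm_num
  rw [hset]
  exact hFγ

end Main

section Final

variable {n : ℕ}

local notation "Euc" => EuclideanSpace ℝ (Fin n)

lemma AA_measurable (u v : Euc) :
    MeasurableSet {r : Euc | ¬(0 ≤ ⟪u, r⟫ ↔ 0 ≤ ⟪v, r⟫)} := by
  have hS : ∀ w : Euc, MeasurableSet {r : Euc | 0 ≤ ⟪w, r⟫} := fun w =>
    (isClosed_le continuous_const (innerSL ℝ w).continuous).measurableSet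
  have : {r : Euc | ¬(0 ≤ ⟪u, r⟫ ↔ 0 ≤ ⟪v, r⟫)}
      = ({r : Euc | 0 ≤ ⟪u, r⟫} ∩ {r : Euc | 0 ≤ ⟪v, r⟫}ᶜ)
      ∪ ({r : Euc | 0 ≤ ⟪u, r⟫}ᶜ ∩ {r : Euc | 0 ≤ ⟪v, r⟫}) := by
    ext r
    simp only [Set.mem_setOf_eq, Set.mem_union, Set.mem_inter_iff, Set.mem_compl_iff]
    tauto
  rw [this]
  exact (((hS u).inter (hS v).compl).union ((hS u).compl.inter (hS v)))

end Final



/-- If `u, v` are unit vectors in `ℝ^n` (`n ≥ 2`) and `r` is distributed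
according to the uniform (i.e. rotation-invariant) probability measure on the unit
sphere, then `𝔼[sgn⟨r,u⟩ · sgn⟨r,v⟩] = 1 - (2/π) · arccos ⟨u,v⟩`. -/
theorem expectation_sign_product_eq_one_sub_two_arccos_div_pi
    (n : ℕ) (hn : 2 ≤ n)
    (u v : EuclideanSpace ℝ (Fin n)) (hu : ‖u‖ = 1) (hv : ‖v‖ = 1)
    (μ : Measure (EuclideanSpace ℝ (Fin n))) [IsProbabilityMeasure μ]
    (hsphere : μ {r | ‖r‖ = 1} = 1)
    (hinv : ∀ T : EuclideanSpace ℝ (Fin n) ≃ₗᵢ[ℝ] EuclideanSpace ℝ (Fin n),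
      μ.map T = μ) :
    ∫ r, sgn (inner ℝ r u : ℝ) * sgn (inner ℝ r v : ℝ) ∂μ =
      1 - (2 / π) * Real.arccos (inner ℝ u v : ℝ) := by
  have hc1 : |(⟪u, v⟫ : ℝ)| ≤ 1 := by
    have := abs_real_inner_le_norm u v
    rwa [hu, hv, mul_one] at this
  have hcle := abs_le.mp hc1
  set θ : ℝ := Real.arccos ⟪u, v⟫ with hθdef
  have hθ0 : 0 ≤ θ := Real.arccos_nonneg _
  have hθπ : θ ≤ π := Real.arccos_le_pi _
  have hcos : Real.cos θ = ⟪u, v⟫ := Real.cos_arccos hcle.1 hcle.2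
  have hsin : Real.sin θ = Real.sqrt (1 - ⟪u, v⟫ ^ 2) := by
    rw [hθdef]; exact Real.sin_arccos _
  have huu : ⟪u, u⟫ = 1 := inner_unit hu
  have hvv : ⟪v, v⟫ = 1 := inner_unit hv
  -- construct the orthonormal partner b
  obtain ⟨b, hbnorm, hub, hv2⟩ : ∃ b : EuclideanSpace ℝ (Fin n),
      ‖b‖ = 1 ∧ ⟪u, b⟫ = 0 ∧ v = Real.cos θ • u + Real.sin θ • b := by
    by_cases hvu : v - ⟪u, v⟫ • u = 0
    · obtain ⟨b, hbnorm, hub⟩ := exists_unit_orthogonal hn u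
      have hveq : v = (⟪u, v⟫ : ℝ) • u := by rwa [sub_eq_zero] at hvu
      have habs1 : |(⟪u, v⟫ : ℝ)| = 1 := by
        have h1 : ‖(⟪u, v⟫ : ℝ) • u‖ = |(⟪u, v⟫ : ℝ)| * ‖u‖ := by
          rw [norm_smul, Real.norm_eq_abs]
        rw [← hveq, hu, hv, mul_one] at h1
        linarith [h1]
      have hsin0 : Real.sin θ = 0 := by
        rw [hsin, show (1 : ℝ) - ⟪u, v⟫ ^ 2 = 0 from by
          rw [← sq_abs, habs1]; ring, Real.sqrt_zero]
      exact ⟨b, hbnorm, hub, by rw [hsin0, zero_smul, add_zero, hcos]; exact hveq⟩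
    · set d : EuclideanSpace ℝ (Fin n) := v - ⟪u, v⟫ • u with hddef
      have hdnorm_sq : ‖d‖ ^ 2 = 1 - ⟪u, v⟫ ^ 2 := by
        rw [← real_inner_self_eq_norm_sq, hddef]
        simp only [inner_sub_left, inner_sub_right, real_inner_smul_left,
          real_inner_smul_right, huu, hvv, real_inner_comm v u]
        ring
      set b : EuclideanSpace ℝ (Fin n) := ‖d‖⁻¹ • d with hbdef
      have hdne : ‖d‖ ≠ 0 := norm_ne_zero_iff.mpr hvu
      have hbnorm : ‖b‖ = 1 := by
        rw [hbdef, norm_smul, norm_inv, norm_norm, inv_mul_cancel₀ hdne]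
      have hub : ⟪u, b⟫ = 0 := by
        rw [hbdef, real_inner_smul_right, hddef, inner_sub_right,
          real_inner_smul_right, huu]
        ring
      have hsind : Real.sin θ = ‖d‖ := by
        rw [hsin, ← hdnorm_sq, Real.sqrt_sq (norm_nonneg d)]
      refine ⟨b, hbnorm, hub, ?_⟩
      rw [hcos, hsind, hbdef, smul_smul, mul_inv_cancel₀ hdne, one_smul, hddef]
      module
  -- the separating set
  set A : Set (EuclideanSpace ℝ (Fin n)) :=
    {r | ¬(0 ≤ ⟪u, r⟫ ↔ 0 ≤ ⟪v, r⟫)} with hAdef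
  have hAmeas : MeasurableSet A := AA_measurable u v
  have hkey : (μ A).toReal = θ / π := by
    have := measure_AA μ hsphere hinv u b hu hbnorm hub θ hθ0 hθπ
    rw [← hv2] at this
    exact this
  -- pointwise identity
  have hpt : ∀ r, sgn (inner ℝ r u : ℝ) * sgn (inner ℝ r v : ℝ)
      = 1 - 2 * A.indicator (fun _ => (1 : ℝ)) r := by
    intro r
    have hru : (inner ℝ r u : ℝ) = ⟪u, r⟫ := real_inner_comm u r
    have hrv : (inner ℝ r v : ℝ) = ⟪v, r⟫ := real_inner_comm v r
    have hmemA : r ∈ A ↔ ¬(0 ≤ ⟪u, r⟫ ↔ 0 ≤ ⟪v, r⟫) := by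
      rw [hAdef]; exact Iff.rfl
    unfold sgn
    rw [hru, hrv]
    by_cases h1 : (0 : ℝ) ≤ ⟪u, r⟫ <;> by_cases h2 : (0 : ℝ) ≤ ⟪v, r⟫
    · rw [if_pos h1, if_pos h2,
        Set.indicator_of_notMem (fun hr => (hmemA.mp hr) (iff_of_true h1 h2))]
      norm_num
    · rw [if_pos h1, if_neg h2,
        Set.indicator_of_mem (hmemA.mpr (fun hiff => h2 (hiff.mp h1)))]
      norm_num
    · rw [if_neg h1, if_pos h2,
        Set.indicator_of_mem (hmemA.mpr (fun hiff => h1 (hiff.mpr h2)))]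
      norm_num
    · rw [if_neg h1, if_neg h2,
        Set.indicator_of_notMem (fun hr => (hmemA.mp hr) (iff_of_false h1 h2))]
      norm_num
  rw [integral_congr_ae (Filter.Eventually.of_forall hpt)]
  have hind : Integrable (fun r => A.indicator (fun _ => (1 : ℝ)) r) μ :=
    (integrable_const (1 : ℝ)).indicator hAmeas
  rw [integral_sub (integrable_const _) (hind.const_mul 2), integral_const,
    integral_const_mul, integral_indicator_const _ hAmeas, measureReal_def μ A, hkey]
  simp only [measureReal_def, measure_univ, ENNReal.toReal_one, smul_eq_mul, one_smul, mul_one]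
  field_simp
end

section
/- For every x ∈ [−1, 1], the inequality (1/π)·arccos(x) ≥ 0.878·(1 − x)/2 holds; that is, the Goemans–Williamson constant α_GW = min over x ∈ [−1,1] of ((1/π)·arccos(x)) / ((1/2)(1−x)) satisfies α_GW > 0.878. -/
open Real

lemma gw_poly (v : ℝ) (hv0 : 0 ≤ v) (hv1 : v ≤ 0.3926992) :
    4*v < 3.141592 * (0.878 * (2*v - (4/3)*v^3 - (5/48)*v^4)^2 + 0.122) := by
  nlinarith [sq_nonneg (v - 0.2038), sq_nonneg (v*(v - 0.2038)), sq_nonneg (v^2*(v-0.2038)),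
    sq_nonneg (v^3*(v-0.2038)), mul_nonneg hv0 hv0, mul_nonneg (mul_nonneg hv0 hv0) hv0,
    sq_nonneg (v^2 - 0.0415)]

lemma gw_region3 (v : ℝ) (hv0 : 0 ≤ v) (hv1 : v ≤ 0.3926992) :
    0.439 * π * (1 - Real.cos (π - 4*v)) < π - 4*v := by
  have hpi1 : (3.141592 : ℝ) < π := by linarith [Real.pi_gt_d6]
  have hpi2 : π < 3.141593 := by linarith [Real.pi_lt_d6]
  have hvabs : |v| ≤ 1 := by rw [abs_of_nonneg hv0]; linarith
  have hs : v - v ^ 3 / 6 - v ^ 4 * (5 / 96) ≤ Real.sin v := by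
    have h := (abs_sub_le_iff.mp (Real.sin_bound hvabs)).2
    rw [abs_of_nonneg hv0] at h
    nlinarith [pow_nonneg hv0 4, mul_nonneg (pow_nonneg hv0 4) (sub_nonneg.2 hv1)]
  have hcb : 1 - v ^ 2 / 2 ≤ Real.cos v := Real.one_sub_sq_div_two_le_cos
  have h1 : 0 ≤ v - v ^ 3 / 6 - v ^ 4 * (5 / 96) := by
    nlinarith [mul_nonneg hv0 hv0, mul_nonneg (mul_nonneg hv0 hv0) hv0,
      mul_nonneg (mul_nonneg (mul_nonneg hv0 hv0) hv0) hv0,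
      mul_nonneg (mul_nonneg hv0 hv0) (sub_nonneg.2 hv1),
      mul_nonneg (mul_nonneg (mul_nonneg hv0 hv0) hv0) (sub_nonneg.2 hv1)]
  have h2 : 0 ≤ 1 - v ^ 2 / 2 := by nlinarith
  have hsinv : 0 ≤ Real.sin v :=
    Real.sin_nonneg_of_nonneg_of_le_pi hv0 (by linarith)
  have hM : 2*v - (4/3)*v^3 - (5/48)*v^4 ≤ Real.sin (2 * v) := by
    rw [Real.sin_two_mul]
    have hmul : (v - v ^ 3 / 6 - v ^ 4 * (5 / 96)) * (1 - v ^ 2 / 2)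
        ≤ Real.sin v * Real.cos v := mul_le_mul hs hcb h2 hsinv
    nlinarith [pow_nonneg hv0 5, pow_nonneg hv0 6]
  have hM0 : 0 ≤ 2*v - (4/3)*v^3 - (5/48)*v^4 := by
    nlinarith [mul_nonneg hv0 hv0, mul_nonneg (mul_nonneg hv0 hv0) hv0,
      mul_nonneg (mul_nonneg (mul_nonneg hv0 hv0) hv0) hv0,
      mul_nonneg (mul_nonneg hv0 hv0) (sub_nonneg.2 hv1),
      mul_nonneg (mul_nonneg (mul_nonneg hv0 hv0) hv0) (sub_nonneg.2 hv1)]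
  have hcosδ : Real.cos (4*v) = 1 - 2 * Real.sin (2*v) ^ 2 := by
    have := Real.sin_sq_eq_half_sub (2*v)
    have h4 : 2 * (2*v) = 4*v := by ring
    rw [h4] at this
    linarith
  rw [Real.cos_pi_sub, hcosδ]
  have hs2 : (2*v - (4/3)*v^3 - (5/48)*v^4)^2 ≤ Real.sin (2*v)^2 :=
    pow_le_pow_left₀ hM0 hM 2
  have hpoly := gw_poly v hv0 hv1
  have hp1 : π * (2*v - (4/3)*v^3 - (5/48)*v^4)^2 ≤ π * Real.sin (2*v)^2 :=
    mul_le_mul_of_nonneg_left hs2 Real.pi_pos.le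
  have hp2 : (3.141592 : ℝ) * (2*v - (4/3)*v^3 - (5/48)*v^4)^2
      ≤ π * (2*v - (4/3)*v^3 - (5/48)*v^4)^2 :=
    mul_le_mul_of_nonneg_right hpi1.le (sq_nonneg _)
  nlinarith [hp1, hp2, hpoly]

lemma gw_key {θ : ℝ} (h0 : 0 < θ) (h1 : θ ≤ π) :
    0.439 * π * (1 - Real.cos θ) < θ := by
  have hpi1 : (3.141592 : ℝ) < π := by linarith [Real.pi_gt_d6]
  have hpi2 : π < 3.141593 := by linarith [Real.pi_lt_d6]
  rcases le_or_gt θ 1.44 with hA | hA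
  · have hc : 1 - θ ^ 2 / 2 ≤ Real.cos θ := Real.one_sub_sq_div_two_le_cos
    nlinarith [sq_nonneg θ]
  rcases le_or_gt θ (π / 2) with hB | hB
  · have hc : 0 ≤ Real.cos θ := Real.cos_nonneg_of_mem_Icc ⟨by linarith, hB⟩
    have hc1 : Real.cos θ ≤ 1 := Real.cos_le_one θ
    nlinarith
  · have h := gw_region3 ((π - θ)/4) (by linarith) (by linarith)
    have hθ : π - 4 * ((π - θ)/4) = θ := by ring
    rw [hθ] at h
    exact h

/-- The strict pointwise inequality for `x ∈ [-1, 1)`. -/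
lemma gw_strict {x : ℝ} (hx1 : -1 ≤ x) (hx2 : x < 1) :
    0.878 * ((1 - x) / 2) < (1 / π) * Real.arccos x := by
  have hθ0 : 0 < Real.arccos x := Real.arccos_pos.2 hx2
  have hθπ : Real.arccos x ≤ π := Real.arccos_le_pi x
  have hcos : Real.cos (Real.arccos x) = x := Real.cos_arccos hx1 hx2.le
  have hkey := gw_key hθ0 hθπ
  rw [hcos] at hkey
  have hπ : (0:ℝ) < π := Real.pi_pos
  rw [div_mul_eq_mul_div, one_mul, lt_div_iff₀ hπ]
  nlinarith

/-- For every `x ∈ [-1, 1]` one has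
`(1/π) · arccos x ≥ 0.878 · (1 - x)/2`; equivalently, the Goemans–Williamson constant
`α_GW = min_{x ∈ [-1,1)} ((1/π) · arccos x) / ((1/2) · (1 - x))` satisfies
`α_GW > 0.878`. -/
theorem goemans_williamson_constant_gt
    : (∀ x ∈ Set.Icc (-1 : ℝ) 1, 0.878 * ((1 - x) / 2) ≤ (1 / π) * Real.arccos x) ∧
      (∀ α : ℝ, IsLeast {r : ℝ | ∃ x ∈ Set.Ico (-1 : ℝ) 1,
          r = ((1 / π) * Real.arccos x) / ((1 / 2) * (1 - x))} α → 0.878 < α) := by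
  constructor
  · rintro x ⟨hx1, hx2⟩
    rcases eq_or_lt_of_le hx2 with rfl | hx2'
    · simp [Real.arccos_one]
    · exact (gw_strict hx1 hx2').le
  · rintro α ⟨⟨x, ⟨hx1, hx2⟩, rfl⟩, -⟩
    have hpos : (0:ℝ) < (1 / 2) * (1 - x) := by nlinarith
    rw [lt_div_iff₀ hpos]
    have := gw_strict hx1 hx2
    nlinarith
end
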